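/- arXiv:math/0008152 — 3 statements merged into one kernel-verified Lean document; each statement's English description precedes it below -/
import Mathlib

section
/- The generating function G_{k,ℓ}(t) counting partitions fitting inside the (k,ℓ)-hook satisfies the recurrence G_{k,ℓ}(t) = G_{k,ℓ-1}(t) + t^{ℓ(k+1)} · G_k(t) · G_ℓ(t), where G_m(t) = ∏_{i=1}^m 1/(1-t^i) is the generating function for partitions with at most m parts. -/
open PowerSeries Finset

/-- A partition fits inside the `(k,ℓ)`-hook iff at most `k` of its parts exceed `ℓ`,
i.e. `λ_{k+i} ≤ ℓ` for all `i ≥ 1`. -/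
def InHook (k l : ℕ) {n : ℕ} (p : Nat.Partition n) : Prop :=
  (p.parts.filter (fun x => l < x)).card ≤ k

/-- `G_{k,ℓ}(t) = ∑_λ t^{|λ|}` over partitions fitting inside the `(k,ℓ)`-hook. -/
noncomputable def hookGF (k l : ℕ) : PowerSeries ℚ :=
  PowerSeries.mk fun n => (Nat.card {p : Nat.Partition n // InHook k l p} : ℚ)

/-- `G_m(t) = ∏_{i=1}^m 1/(1-t^i)`. -/
noncomputable def Gm (m : ℕ) : PowerSeries ℚ :=
  ∏ i ∈ Finset.Icc 1 m, (1 - (PowerSeries.X : PowerSeries ℚ) ^ i)⁻¹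

namespace HookAux

noncomputable section

variable {α : Type*}

open scoped Classical
open YoungDiagram

/-- A convenience constructor for the power series whose coefficients indicate a subset. -/
def indicatorSeries (α : Type*) [Semiring α] (s : Set ℕ) : PowerSeries α :=
  PowerSeries.mk fun n => if n ∈ s then 1 else 0

theorem coeff_indicator (s : Set ℕ) [Semiring α] (n : ℕ) :
    coeff n (indicatorSeries α s) = if n ∈ s then 1 else 0 :=
  coeff_mk _ _

theorem constantCoeff_indicator (s : Set ℕ) [Semiring α] :
    constantCoeff (indicatorSeries α s) = if 0 ∈ s then 1 else 0 :=
  rfl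

theorem num_series' [Field α] (i : ℕ) :
    (1 - (X : PowerSeries α) ^ (i + 1))⁻¹ = indicatorSeries α {k | i + 1 ∣ k} := by
  rw [PowerSeries.inv_eq_iff_mul_eq_one]
  · ext n
    cases n with
    | zero => simp [mul_sub, zero_pow, constantCoeff_indicator]
    | succ n =>
      simp only [coeff_one, if_false, mul_sub, mul_one, coeff_indicator,
        LinearMap.map_sub, reduceCtorEq]
      simp_rw [coeff_mul, coeff_X_pow, coeff_indicator, @boole_mul _ _ _ _]
      simp only [Set.mem_setOf_eq]; erw [sum_ite, sum_ite]
      simp_rw [@filter_filter _ _ _ _ _, sum_const_zero, add_zero, sum_const, nsmul_eq_mul, mul_one,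
        sub_eq_iff_eq_add, zero_add]
      symm
      split_ifs with h
      · suffices #{a ∈ antidiagonal (n + 1) | i + 1 ∣ a.fst ∧ a.snd = i + 1} = 1 by
          convert congr_arg ((↑) : ℕ → α) this; norm_cast
        rw [card_eq_one]
        cases' h with p hp
        refine ⟨((i + 1) * (p - 1), i + 1), ?_⟩
        ext ⟨a₁, a₂⟩
        simp only [mem_filter, Prod.mk.injEq, HasAntidiagonal.mem_antidiagonal, mem_singleton]
        constructor
        · rintro ⟨a_left, ⟨a, rfl⟩, rfl⟩
          refine ⟨?_, rfl⟩
          rw [Nat.mul_sub_left_distrib, ← hp, ← a_left, mul_one, Nat.add_sub_cancel]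
        · rintro ⟨rfl, rfl⟩
          match p with
          | 0 => rw [mul_zero] at hp; cases hp
          | p + 1 => rw [hp]; simp [mul_add]
      · suffices #{a ∈ antidiagonal (n + 1) | i + 1 ∣ a.fst ∧ a.snd = i + 1} = 0 by
          convert congr_arg ((↑) : ℕ → α) this; norm_cast
        rw [card_eq_zero]
        apply eq_empty_of_forall_notMem
        simp only [Prod.forall, mem_filter, not_and, HasAntidiagonal.mem_antidiagonal]
        rintro _ h₁ h₂ ⟨a, rfl⟩ rfl
        apply h
        simp [← h₂]
  · simp [zero_pow]

-- The main workhorse of the partition theorem proof.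
theorem partialGF_prop (α : Type*) [CommSemiring α] (n : ℕ) (s : Finset ℕ) (hs : ∀ i ∈ s, 0 < i)
    (c : ℕ → Set ℕ) (hc : ∀ i, i ∉ s → 0 ∈ c i) :
    #{p : n.Partition | (∀ j, p.parts.count j ∈ c j) ∧ ∀ j ∈ p.parts, j ∈ s} =
      coeff n (∏ i ∈ s, indicatorSeries α ((· * i) '' c i)) := by
  simp_rw [coeff_prod, coeff_indicator, prod_boole, sum_boole]
  apply congr_arg
  simp only [mem_univ, forall_true_left, not_and, not_forall, exists_prop,
    Set.mem_image, not_exists]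
  set φ : (a : Nat.Partition n) →
    a ∈ filter (fun p ↦ (∀ (j : ℕ), Multiset.count j p.parts ∈ c j) ∧ ∀ j ∈ p.parts, j ∈ s) univ →
    ℕ →₀ ℕ := fun p _ => {
      toFun := fun i => Multiset.count i p.parts • i
      support := Finset.filter (fun i => i ≠ 0) p.parts.toFinset
      mem_support_toFun := fun a => by
        simp only [smul_eq_mul, ne_eq, mul_eq_zero, Multiset.count_eq_zero]
        rw [not_or, not_not]
        simp only [Multiset.mem_toFinset, not_not, mem_filter] }
  refine Finset.card_bij φ ?_ ?_ ?_
  · intro a ha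
    simp only [φ, not_forall, not_exists, not_and, exists_prop, mem_filter]
    rw [mem_finsuppAntidiag]
    dsimp only [ne_eq, smul_eq_mul, id_eq, eq_mpr_eq_cast, le_eq_subset, Finsupp.coe_mk]
    simp only [mem_univ, forall_true_left, not_and, not_forall, exists_prop,
      mem_filter, true_and] at ha
    refine ⟨⟨?_, fun i ↦ ?_⟩, fun i _ ↦ ⟨a.parts.count i, ha.1 i, rfl⟩⟩
    · conv_rhs => simp [← a.parts_sum]
      rw [sum_multiset_count_of_subset _ s]
      · simp only [smul_eq_mul]
      · intro i
        simp only [Multiset.mem_toFinset, not_not, mem_filter]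
        apply ha.2
    · simp only [ne_eq, Multiset.mem_toFinset, not_not, mem_filter, and_imp]
      exact fun hi _ ↦ ha.2 i hi
  · intro p₁ hp₁ p₂ hp₂ h
    apply Nat.Partition.ext
    simp only [true_and, mem_univ, mem_filter] at hp₁ hp₂
    ext i
    simp only [φ, ne_eq, Multiset.mem_toFinset, not_not, smul_eq_mul, Finsupp.mk.injEq] at h
    by_cases hi : i = 0
    · rw [hi]
      rw [Multiset.count_eq_zero_of_notMem]
      · rw [Multiset.count_eq_zero_of_notMem]
        intro a; exact Nat.lt_irrefl 0 (hs 0 (hp₂.2 0 a))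
      intro a; exact Nat.lt_irrefl 0 (hs 0 (hp₁.2 0 a))
    · rw [← mul_left_inj' hi]
      rw [funext_iff] at h
      exact h.2 i
  · simp only [φ, mem_filter, mem_finsuppAntidiag, mem_univ, exists_prop, true_and, and_assoc]
    rintro f ⟨hf, hf₃, hf₄⟩
    have hf' : f ∈ finsuppAntidiag s n := mem_finsuppAntidiag.mpr ⟨hf, hf₃⟩
    simp only [mem_finsuppAntidiag] at hf'
    refine ⟨⟨∑ i ∈ s, Multiset.replicate (f i / i) i, ?_, ?_⟩, ?_, ?_, ?_⟩
    · intro i hi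
      simp only [exists_prop, Multiset.mem_sum, mem_map, Function.Embedding.coeFn_mk] at hi
      rcases hi with ⟨t, ht, z⟩
      apply hs
      rwa [Multiset.eq_of_mem_replicate z]
    · simp_rw [Multiset.sum_sum, Multiset.sum_replicate, Nat.nsmul_eq_mul]
      rw [← hf'.1]
      refine sum_congr rfl fun i hi => Nat.div_mul_cancel ?_
      rcases hf₄ i hi with ⟨w, _, hw₂⟩
      rw [← hw₂]
      exact dvd_mul_left _ _
    · intro i
      simp_rw [Multiset.count_sum', Multiset.count_replicate, sum_ite_eq']
      split_ifs with h
      · rcases hf₄ i h with ⟨w, hw₁, hw₂⟩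
        rwa [← hw₂, Nat.mul_div_cancel _ (hs i h)]
      · exact hc _ h
    · intro i hi
      rw [Multiset.mem_sum] at hi
      rcases hi with ⟨j, hj₁, hj₂⟩
      rwa [Multiset.eq_of_mem_replicate hj₂]
    · ext i
      simp_rw [Multiset.count_sum', Multiset.count_replicate, sum_ite_eq']
      simp only [ne_eq, Multiset.mem_toFinset, not_not, smul_eq_mul, ite_mul,
        zero_mul, Finsupp.coe_mk]
      split_ifs with h
      · apply Nat.div_mul_cancel
        rcases hf₄ i h with ⟨w, _, hw₂⟩
        apply Dvd.intro_left _ hw₂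
      · apply symm
        rw [← Finsupp.notMem_support_iff]
        exact notMem_mono hf'.2 h


open scoped Classical in
theorem coeff_Gm (m n : ℕ) :
    (#{p : n.Partition | ∀ j ∈ p.parts, j ≤ m} : ℚ) = coeff n (Gm m) := by
  have h := partialGF_prop ℚ n (Finset.Icc 1 m) (fun i hi => (Finset.mem_Icc.mp hi).1)
      (fun _ => Set.univ) (fun _ _ => trivial)
  have hprod : (∏ i ∈ Finset.Icc 1 m, indicatorSeries ℚ ((· * i) '' (Set.univ : Set ℕ)))
      = Gm m := by
    rw [Gm]
    refine prod_congr rfl fun i hi => ?_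
    obtain ⟨h1, _⟩ := Finset.mem_Icc.mp hi
    obtain ⟨j, rfl⟩ : ∃ j, i = j + 1 := ⟨i - 1, by omega⟩
    rw [num_series']
    apply congrArg
    ext x
    simp only [Set.mem_image, Set.mem_univ, true_and, Set.mem_setOf_eq]
    constructor
    · rintro ⟨a, rfl⟩; exact Dvd.intro_left a rfl
    · rintro ⟨c, rfl⟩; exact ⟨c, mul_comm _ _⟩
  rw [hprod] at h
  rw [← h]
  norm_cast
  apply congrArg
  apply Finset.filter_congr
  intro p _
  simp only [Set.mem_univ, forall_const, true_and, Finset.mem_Icc]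
  constructor
  · intro hh j hj
    exact ⟨p.parts_pos hj, hh j hj⟩
  · intro hh j hj
    exact (hh j hj).2


theorem list_range_map_sum (n : ℕ) (f : ℕ → ℕ) :
    ((List.range n).map f).sum = ∑ i ∈ Finset.range n, f i := by
  induction n with
  | zero => simp
  | succ n ih =>
    rw [List.range_succ, List.map_append, List.sum_append, Finset.sum_range_succ, ih]
    simp

theorem yd_card_eq_sum_rowLens (μ : YoungDiagram) : μ.card = μ.rowLens.sum := by
  have hcells : μ.cells = (Finset.range (μ.colLen 0)).biUnion (fun i => μ.row i) := by
    ext ⟨i, j⟩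
    simp only [Finset.mem_biUnion, Finset.mem_range, mem_row_iff, mem_cells]
    constructor
    · intro hc
      exact ⟨i, lt_of_lt_of_le (mem_iff_lt_colLen.mp hc) (μ.colLen_anti 0 j (Nat.zero_le _)),
        hc, rfl⟩
    · rintro ⟨i', hi', hc, rfl⟩
      exact hc
  rw [YoungDiagram.card, hcells, Finset.card_biUnion]
  · rw [rowLens]
    rw [list_range_map_sum]
    exact Finset.sum_congr rfl fun i _ => (μ.rowLen_eq_card).symm
  · intro i _ j _ hij
    rw [Function.onFun, Finset.disjoint_left]
    intro c hci hcj
    exact hij ((mem_row_iff.mp hci).2.symm.trans (mem_row_iff.mp hcj).2)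

theorem yd_transpose_card (μ : YoungDiagram) : μ.transpose.card = μ.card := by
  show (μ.transpose).cells.card = _
  rw [show μ.transpose.cells = ((Equiv.prodComm ℕ ℕ).finsetCongr μ.cells) from rfl,
    Equiv.finsetCongr_apply, Finset.card_map]

/-- The Young diagram of a partition. -/
def toYD {n : ℕ} (p : Nat.Partition n) : YoungDiagram :=
  ofRowLens (p.parts.sort (· ≥ ·)) ((p.parts.pairwise_sort _).sortedGE)

theorem toYD_rowLens {n : ℕ} (p : Nat.Partition n) :
    (toYD p).rowLens = p.parts.sort (· ≥ ·) :=
  rowLens_ofRowLens_eq_self fun x hx =>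
    p.parts_pos (by rwa [Multiset.mem_sort] at hx)

theorem sort_of_sorted (w : List ℕ) (hw : w.Pairwise (· ≥ ·)) :
    Multiset.sort (↑w : Multiset ℕ) (· ≥ ·) = w := by
  apply List.Perm.eq_of_pairwise' (Multiset.pairwise_sort _ _) hw
  rw [← Multiset.coe_eq_coe, Multiset.sort_eq]

/-- The conjugate (transpose) partition. -/
def conj {n : ℕ} (p : Nat.Partition n) : Nat.Partition n where
  parts := ((toYD p).transpose.rowLens : Multiset ℕ)
  parts_pos := fun hx => (toYD p).transpose.pos_of_mem_rowLens _ (by simpa using hx)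
  parts_sum := by
    rw [Multiset.sum_coe, ← yd_card_eq_sum_rowLens, yd_transpose_card,
      yd_card_eq_sum_rowLens, toYD_rowLens, ← Multiset.sum_coe, Multiset.sort_eq,
      p.parts_sum]

theorem toYD_conj {n : ℕ} (p : Nat.Partition n) : toYD (conj p) = (toYD p).transpose := by
  have h : (conj p).parts.sort (· ≥ ·) = (toYD p).transpose.rowLens :=
    sort_of_sorted _ (rowLens_sorted _).pairwise
  have key : ∀ (w : List ℕ) (hw : w.SortedGE),
      w = (toYD p).transpose.rowLens → ofRowLens w hw = (toYD p).transpose := by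
    rintro w hw rfl
    exact ofRowLens_to_rowLens_eq_self
  exact key _ _ h

theorem conj_conj {n : ℕ} (p : Nat.Partition n) : conj (conj p) = p := by
  apply Nat.Partition.ext
  show (((toYD (conj p)).transpose.rowLens : List ℕ) : Multiset ℕ) = p.parts
  rw [toYD_conj, transpose_transpose, toYD_rowLens, Multiset.sort_eq]

theorem conj_parts_card {n : ℕ} (p : Nat.Partition n) :
    (conj p).parts.card = (toYD p).rowLen 0 := by
  show Multiset.card (((toYD p).transpose.rowLens : List ℕ) : Multiset ℕ) = _
  rw [Multiset.coe_card, length_rowLens, colLen_transpose]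

theorem parts_card_eq {n : ℕ} (p : Nat.Partition n) :
    p.parts.card = (toYD p).colLen 0 := by
  rw [← length_rowLens, toYD_rowLens, ← Multiset.coe_card, Multiset.sort_eq]

theorem rowLen_zero_le {n : ℕ} (p : Nat.Partition n) (c : ℕ)
    (h : ∀ x ∈ p.parts, x ≤ c) : (toYD p).rowLen 0 ≤ c := by
  rcases Nat.eq_zero_or_pos ((toYD p).rowLen 0) with h0 | h0
  · omega
  · have hmem : (0, 0) ∈ toYD p := mem_iff_lt_rowLen.mpr h0
    rw [toYD, mem_ofRowLens] at hmem
    obtain ⟨hl, _⟩ := hmem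
    have : (toYD p).rowLen 0 = (p.parts.sort (· ≥ ·))[0] := rowLen_ofRowLens (w := p.parts.sort (· ≥ ·)) ⟨0, hl⟩
    rw [this]
    exact h _ (by rw [← Multiset.mem_sort (· ≥ ·)]; exact List.getElem_mem hl)

theorem conj_parts_le {n : ℕ} (p : Nat.Partition n) (c : ℕ) (h : p.parts.card ≤ c) :
    ∀ x ∈ (conj p).parts, x ≤ c := by
  intro x hx
  have hx' : x ∈ (toYD p).transpose.rowLens := by simpa [conj] using hx
  rw [List.mem_iff_getElem] at hx'
  obtain ⟨i, hi, rfl⟩ := hx'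
  rw [get_rowLens]
  calc (toYD p).transpose.rowLen i ≤ (toYD p).transpose.rowLen 0 :=
        (toYD p).transpose.rowLen_anti 0 i (Nat.zero_le _)
    _ = (toYD p).colLen 0 := rowLen_transpose _ _
    _ = p.parts.card := (parts_card_eq p).symm
    _ ≤ c := h

open scoped Classical in
theorem card_conj_eq (a c : ℕ) :
    #{q : a.Partition | q.parts.card ≤ c} = #{q : a.Partition | ∀ x ∈ q.parts, x ≤ c} := by
  apply Finset.card_bij' (fun p _ => conj p) (fun p _ => conj p)
  · intro p hp
    simp only [Finset.mem_filter, Finset.mem_univ, true_and] at hp ⊢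
    exact conj_parts_le p c hp
  · intro p hp
    simp only [Finset.mem_filter, Finset.mem_univ, true_and] at hp ⊢
    rw [conj_parts_card]
    exact rowLen_zero_le p c hp
  · intro p _; exact conj_conj p
  · intro p _; exact conj_conj p


theorem aux_mul_split (k j l : ℕ) (hj : j ≤ k + 1) : j * l + (k + 1 - j) * l = l * (k + 1) := by
  rw [← add_mul, Nat.add_sub_cancel' hj, mul_comm]

theorem msum_map_sub (l : ℕ) (m : Multiset ℕ) (h : ∀ x ∈ m, l ≤ x) :
    (m.map (· - l)).sum + Multiset.card m * l = m.sum := by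
  induction m using Multiset.induction with
  | empty => simp
  | cons a s ih =>
    have ha := h a (Multiset.mem_cons_self _ _)
    have ihs := ih (fun x hx => h x (Multiset.mem_cons_of_mem hx))
    simp only [Multiset.map_cons, Multiset.sum_cons, Multiset.card_cons, add_mul, one_mul]
    omega

theorem msum_map_add (l : ℕ) (m : Multiset ℕ) :
    (m.map (· + l)).sum = m.sum + Multiset.card m * l := by
  induction m using Multiset.induction with
  | empty => simp
  | cons a s ih =>
    simp only [Multiset.map_cons, Multiset.sum_cons, Multiset.card_cons, add_mul, one_mul, ih]
    omega

theorem filter_le_split (l : ℕ) (m : Multiset ℕ) :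
    m.filter (fun x => l ≤ x) = m.filter (fun x => l < x) + m.filter (fun x => x = l) := by
  have h1 : m.filter (fun x => l < x ∨ x = l) = m.filter (fun x => l ≤ x) :=
    Multiset.filter_congr (fun x _ => by omega)
  have h2 : m.filter (fun x => l < x ∧ x = l) = 0 :=
    Multiset.filter_eq_nil.mpr (fun a _ => by omega)
  rw [← h1, Multiset.filter_add_filter, h2, add_zero]

/-- count of `l` is at least `k+1 - j` for partitions in the "difference" set. -/
theorem count_l_ge (k l : ℕ) (m : Multiset ℕ)
    (h2 : k + 1 ≤ Multiset.card (m.filter (fun x => l ≤ x))) :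
    k + 1 - Multiset.card (m.filter (fun x => l < x)) ≤ m.count l := by
  have h := congrArg Multiset.card (filter_le_split l m)
  rw [Multiset.card_add, Multiset.filter_eq', Multiset.card_replicate] at h
  omega

theorem replicate_le_small (k l : ℕ) (m : Multiset ℕ)
    (h2 : k + 1 ≤ Multiset.card (m.filter (fun x => l ≤ x))) :
    Multiset.replicate (k + 1 - Multiset.card (m.filter (fun x => l < x))) l
      ≤ m.filter (fun x => ¬ l < x) := by
  calc Multiset.replicate (k + 1 - Multiset.card (m.filter (fun x => l < x))) l
      ≤ Multiset.replicate (m.count l) l :=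
        (Multiset.replicate_le_replicate l).mpr (count_l_ge k l m h2)
    _ = m.filter (fun x => x = l) := (Multiset.filter_eq' m l).symm
    _ ≤ m.filter (fun x => ¬ l < x) :=
        Multiset.monotone_filter_right m (fun x hx => by omega)


theorem decomp_facts (k l : ℕ) {n : ℕ} (p : Nat.Partition n)
    (h2 : k + 1 ≤ Multiset.card (p.parts.filter (fun x => l ≤ x))) :
    ((p.parts.filter (fun x => l < x)).map (· - l)).sum
        + Multiset.card (p.parts.filter (fun x => l < x)) * l
        = (p.parts.filter (fun x => l < x)).sum
    ∧ (p.parts.filter (fun x => l < x)).sum + (p.parts.filter (fun x => ¬ l < x)).sum = n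
    ∧ (p.parts.filter (fun x => ¬ l < x)
        - Multiset.replicate (k + 1 - Multiset.card (p.parts.filter (fun x => l < x))) l).sum
        + (k + 1 - Multiset.card (p.parts.filter (fun x => l < x))) * l
        = (p.parts.filter (fun x => ¬ l < x)).sum := by
  refine ⟨msum_map_sub l _ (fun x hx => le_of_lt (Multiset.of_mem_filter hx)), ?_, ?_⟩
  · have h := congrArg Multiset.sum (Multiset.filter_add_not (fun x => l < x) p.parts)
    rw [Multiset.sum_add, p.parts_sum] at h
    exact h
  · have hrep := replicate_le_small k l p.parts h2
    have h := congrArg Multiset.sum (tsub_add_cancel_of_le hrep)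
    rw [Multiset.sum_add, Multiset.sum_replicate, smul_eq_mul] at h
    exact h

theorem back_filter_big (k l : ℕ) (q r : Multiset ℕ) (hq : ∀ x ∈ q, 0 < x)
    (hr : ∀ x ∈ r, x ≤ l) :
    (q.map (· + l) + Multiset.replicate (k + 1 - Multiset.card q) l + r).filter
        (fun x => l < x) = q.map (· + l) := by
  rw [Multiset.filter_add, Multiset.filter_add]
  rw [Multiset.filter_eq_self.mpr (fun x hx => by
    obtain ⟨y, hy, rfl⟩ := Multiset.mem_map.mp hx
    have := hq y hy; omega)]
  rw [Multiset.filter_eq_nil.mpr (fun a ha => by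
    rw [Multiset.eq_of_mem_replicate ha]; omega)]
  rw [Multiset.filter_eq_nil.mpr (fun a ha => by have := hr a ha; omega)]
  simp

theorem back_filter_le (k l : ℕ) (q r : Multiset ℕ) (hk : Multiset.card q ≤ k) :
    k + 1 ≤ Multiset.card ((q.map (· + l) + Multiset.replicate (k + 1 - Multiset.card q) l
      + r).filter (fun x => l ≤ x)) := by
  rw [Multiset.filter_add, Multiset.filter_add]
  rw [Multiset.filter_eq_self.mpr (fun x hx => by
    obtain ⟨y, hy, rfl⟩ := Multiset.mem_map.mp hx
    omega)]
  rw [Multiset.filter_eq_self.mpr (fun a ha => by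
    rw [Multiset.eq_of_mem_replicate ha])]
  rw [Multiset.card_add, Multiset.card_add, Multiset.card_map, Multiset.card_replicate]
  omega

theorem map_sub_map_add (l : ℕ) (q : Multiset ℕ) : (q.map (· + l)).map (· - l) = q := by
  rw [Multiset.map_map]
  simp

theorem big_map_add (l : ℕ) (m : Multiset ℕ) :
    ((m.filter (fun x => l < x)).map (· - l)).map (· + l) = m.filter (fun x => l < x) := by
  rw [Multiset.map_map]
  conv_rhs => rw [← Multiset.map_id (m.filter (fun x => l < x))]
  apply Multiset.map_congr rfl
  intro x hx
  have := Multiset.of_mem_filter hx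
  simp only [Function.comp_apply, id_eq]
  omega

open scoped Classical in
theorem hook_step_card (k l n : ℕ) (hl : 1 ≤ l) (he : l * (k + 1) ≤ n) :
    #{p : n.Partition | Multiset.card (p.parts.filter (fun x => l < x)) ≤ k ∧
        k + 1 ≤ Multiset.card (p.parts.filter (fun x => l ≤ x))} =
    ∑ ab ∈ Finset.HasAntidiagonal.antidiagonal (n - l * (k + 1)),
      #{q : Nat.Partition ab.1 | Multiset.card q.parts ≤ k} *
        #{r : Nat.Partition ab.2 | ∀ x ∈ r.parts, x ≤ l} := by
  have hmem : ∀ p ∈ Finset.univ.filter (fun p : n.Partition =>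
      Multiset.card (p.parts.filter (fun x => l < x)) ≤ k ∧
      k + 1 ≤ Multiset.card (p.parts.filter (fun x => l ≤ x))),
      (((p.parts.filter (fun x => l < x)).map (· - l)).sum,
        n - l * (k + 1) - ((p.parts.filter (fun x => l < x)).map (· - l)).sum)
        ∈ Finset.HasAntidiagonal.antidiagonal (n - l * (k + 1)) := by
    intro p hp
    simp only [Finset.mem_filter, Finset.mem_univ, true_and] at hp
    obtain ⟨h1, h2⟩ := hp
    obtain ⟨hA, hB, hC⟩ := decomp_facts k l p h2
    have hsplit := aux_mul_split k (Multiset.card (p.parts.filter (fun x => l < x))) l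
      (by omega)
    rw [Finset.HasAntidiagonal.mem_antidiagonal]
    omega
  rw [Finset.card_eq_sum_card_fiberwise hmem]
  refine Finset.sum_congr rfl fun ab hab => ?_
  rw [Finset.HasAntidiagonal.mem_antidiagonal] at hab
  rw [← Finset.card_product]
  refine Finset.card_bij'
    (fun p hp =>
      (⟨(p.parts.filter (fun x => l < x)).map (· - l),
        fun {x} hx => by
          obtain ⟨y, hy, rfl⟩ := Multiset.mem_map.mp hx
          have := Multiset.of_mem_filter hy
          omega,
        by
          simp only [Finset.mem_filter, Finset.mem_univ, true_and] at hp
          exact congrArg Prod.fst hp.2⟩,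
       ⟨p.parts.filter (fun x => ¬ l < x)
          - Multiset.replicate (k + 1 - Multiset.card (p.parts.filter (fun x => l < x))) l,
        fun {x} hx => by
          have hx' := Multiset.mem_of_le (tsub_le_self) hx
          exact p.parts_pos (Multiset.mem_of_mem_filter hx'),
        by
          simp only [Finset.mem_filter, Finset.mem_univ, true_and] at hp
          obtain ⟨⟨h1, h2⟩, hfp⟩ := hp
          obtain ⟨hA, hB, hC⟩ := decomp_facts k l p h2
          have hsplit := aux_mul_split k (Multiset.card (p.parts.filter (fun x => l < x))) l
            (by omega)
          have hfst := congrArg Prod.fst hfp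
          have hsnd := congrArg Prod.snd hfp
          simp only at hfst hsnd
          omega⟩))
    (fun qr hqr =>
      ⟨qr.1.parts.map (· + l) + Multiset.replicate (k + 1 - Multiset.card qr.1.parts) l
          + qr.2.parts,
        fun {x} hx => by
          rcases Multiset.mem_add.mp hx with hx' | hx'
          · rcases Multiset.mem_add.mp hx' with hx'' | hx''
            · obtain ⟨y, hy, rfl⟩ := Multiset.mem_map.mp hx''
              omega
            · rw [Multiset.eq_of_mem_replicate hx'']; omega
          · exact qr.2.parts_pos hx',
        by
          simp only [Finset.mem_product, Finset.mem_filter, Finset.mem_univ, true_and] at hqr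
          obtain ⟨hq, hr⟩ := hqr
          have hsplit := aux_mul_split k (Multiset.card qr.1.parts) l (by omega)
          rw [Multiset.sum_add, Multiset.sum_add, msum_map_add, Multiset.sum_replicate,
            smul_eq_mul, qr.1.parts_sum, qr.2.parts_sum]
          omega⟩)
    ?_ ?_ ?_ ?_
  · -- hi : image in product
    intro p hp
    simp only [Finset.mem_filter, Finset.mem_univ, true_and] at hp
    obtain ⟨⟨h1, h2⟩, hfp⟩ := hp
    rw [Finset.mem_product]
    constructor
    · simp only [Finset.mem_filter, Finset.mem_univ, true_and]
      show Multiset.card ((p.parts.filter (fun x => l < x)).map (· - l)) ≤ k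
      rw [Multiset.card_map]
      exact h1
    · simp only [Finset.mem_filter, Finset.mem_univ, true_and]
      intro x hx
      have hx' := Multiset.mem_of_le (tsub_le_self) hx
      have := Multiset.of_mem_filter hx'
      omega
  · -- hj : back in fiber
    intro qr hqr
    simp only [Finset.mem_product, Finset.mem_filter, Finset.mem_univ, true_and] at hqr
    obtain ⟨hq, hr⟩ := hqr
    simp only [Finset.mem_filter, Finset.mem_univ, true_and]
    have hbig := back_filter_big k l qr.1.parts qr.2.parts (fun x hx => qr.1.parts_pos hx) hr
    refine ⟨⟨?_, ?_⟩, ?_⟩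
    · show Multiset.card ((qr.1.parts.map (· + l) + _ + qr.2.parts).filter (fun x => l < x)) ≤ k
      rw [hbig, Multiset.card_map]
      exact hq
    · exact back_filter_le k l qr.1.parts qr.2.parts hq
    · show ((((qr.1.parts.map (· + l) + _ + qr.2.parts).filter (fun x => l < x)).map (· - l)).sum, _) = ab
      rw [hbig, map_sub_map_add, qr.1.parts_sum]
      have : n - l * (k + 1) - ab.1 = ab.2 := by omega
      rw [this]
  · -- left inverse
    intro p hp
    simp only [Finset.mem_filter, Finset.mem_univ, true_and] at hp
    obtain ⟨⟨h1, h2⟩, hfp⟩ := hp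
    apply Nat.Partition.ext
    show ((p.parts.filter (fun x => l < x)).map (· - l)).map (· + l)
        + Multiset.replicate
            (k + 1 - Multiset.card ((p.parts.filter (fun x => l < x)).map (· - l))) l
        + (p.parts.filter (fun x => ¬ l < x)
            - Multiset.replicate (k + 1 - Multiset.card (p.parts.filter (fun x => l < x))) l)
        = p.parts
    rw [big_map_add, Multiset.card_map, add_assoc,
      add_tsub_cancel_of_le (replicate_le_small k l p.parts h2),
      Multiset.filter_add_not]
  · -- right inverse
    intro qr hqr
    simp only [Finset.mem_product, Finset.mem_filter, Finset.mem_univ, true_and] at hqr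
    obtain ⟨hq, hr⟩ := hqr
    have hbig := back_filter_big k l qr.1.parts qr.2.parts (fun x hx => qr.1.parts_pos hx) hr
    have hsmall : (qr.1.parts.map (· + l)
        + Multiset.replicate (k + 1 - Multiset.card qr.1.parts) l
        + qr.2.parts).filter (fun x => ¬ l < x)
        = Multiset.replicate (k + 1 - Multiset.card qr.1.parts) l + qr.2.parts := by
      rw [Multiset.filter_add, Multiset.filter_add]
      rw [Multiset.filter_eq_nil.mpr (fun x hx => by
        obtain ⟨y, hy, rfl⟩ := Multiset.mem_map.mp hx
        have := qr.1.parts_pos hy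
        omega)]
      rw [Multiset.filter_eq_self.mpr (fun a ha => by
        rw [Multiset.eq_of_mem_replicate ha]; omega)]
      rw [Multiset.filter_eq_self.mpr (fun a ha => by have := hr a ha; omega)]
      simp
    refine Prod.ext ?_ ?_
    · apply Nat.Partition.ext
      show (((qr.1.parts.map (· + l) + _ + qr.2.parts).filter (fun x => l < x)).map (· - l))
          = qr.1.parts
      rw [hbig, map_sub_map_add]
    · apply Nat.Partition.ext
      show ((qr.1.parts.map (· + l) + _ + qr.2.parts).filter (fun x => ¬ l < x))
          - Multiset.replicate (k + 1
              - Multiset.card ((qr.1.parts.map (· + l) + _ + qr.2.parts).filter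
                  (fun x => l < x))) l
          = qr.2.parts
      rw [hsmall, hbig, Multiset.card_map, add_tsub_cancel_left]


theorem hook_step_empty (k l n : ℕ) (he : n < l * (k + 1)) :
    #{p : n.Partition | Multiset.card (p.parts.filter (fun x => l < x)) ≤ k ∧
        k + 1 ≤ Multiset.card (p.parts.filter (fun x => l ≤ x))} = 0 := by
  rw [Finset.card_eq_zero, Finset.filter_eq_empty_iff]
  rintro p - ⟨h1, h2⟩
  have hle : Multiset.card (p.parts.filter (fun x => l ≤ x)) • l
      ≤ (p.parts.filter (fun x => l ≤ x)).sum :=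
    Multiset.card_nsmul_le_sum (fun x hx => Multiset.of_mem_filter hx)
  have hsum : (p.parts.filter (fun x => l ≤ x)).sum
      + (p.parts.filter (fun x => ¬ l ≤ x)).sum = n := by
    have h := congrArg Multiset.sum (Multiset.filter_add_not (fun x => l ≤ x) p.parts)
    rwa [Multiset.sum_add, p.parts_sum] at h
  rw [smul_eq_mul] at hle
  have hcomm : l * (k + 1) = (k + 1) * l := mul_comm _ _
  have : (k + 1) * l ≤ Multiset.card (p.parts.filter (fun x => l ≤ x)) * l :=
    Nat.mul_le_mul_right l h2
  omega


end

end HookAux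

section Final
open HookAux
open scoped Classical

theorem stmt4 (k l : ℕ) (hl : 1 ≤ l) :
    hookGF k l
      = hookGF k (l - 1)
        + (PowerSeries.X : PowerSeries ℚ) ^ (l * (k + 1)) * Gm k * Gm l := by
  ext n
  rw [map_add, hookGF, hookGF, coeff_mk, coeff_mk]
  have hNat : ∀ P : n.Partition → Prop,
      (Nat.card {p : n.Partition // P p} : ℕ) = #{p : n.Partition | P p} := fun P => by
    rw [Nat.card_eq_fintype_card, Fintype.card_subtype]
  -- split of the left card
  have hmono : ∀ p : n.Partition, InHook k (l - 1) p → InHook k l p := by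
    intro p h
    refine le_trans (Multiset.card_le_card ?_) h
    exact Multiset.monotone_filter_right _ (fun x hx => by omega)
  have hsplit : #{p : n.Partition | InHook k l p} =
      #{p : n.Partition | InHook k (l - 1) p} +
      #{p : n.Partition | Multiset.card (p.parts.filter (fun x => l < x)) ≤ k ∧
        k + 1 ≤ Multiset.card (p.parts.filter (fun x => l ≤ x))} := by
    rw [← Finset.card_filter_add_card_filter_not (p := fun p => InHook k (l - 1) p)
      (s := Finset.univ.filter (fun p : n.Partition => InHook k l p))]
    rw [Finset.filter_filter, Finset.filter_filter]
    congr 1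
    · apply congrArg
      apply Finset.filter_congr
      intro p _
      exact ⟨fun h => h.2, fun h => ⟨hmono p h, h⟩⟩
    · apply congrArg
      apply Finset.filter_congr
      intro p _
      have hpred : p.parts.filter (fun x => l - 1 < x) = p.parts.filter (fun x => l ≤ x) :=
        Multiset.filter_congr (fun x _ => by omega)
      unfold InHook
      rw [hpred]
      omega
  rw [hNat, hNat, hsplit]
  push_cast
  congr 1
  by_cases hee : l * (k + 1) ≤ n
  · rw [hook_step_card k l n hl hee]
    have hx : (coeff n) ((X : PowerSeries ℚ) ^ (l * (k + 1)) * (Gm k * Gm l))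
        = coeff (n - l * (k + 1)) (Gm k * Gm l) := by
      conv_lhs => rw [← Nat.sub_add_cancel hee]
      exact PowerSeries.coeff_X_pow_mul _ _ _
    rw [mul_assoc, hx, PowerSeries.coeff_mul, Nat.cast_sum]
    apply Finset.sum_congr rfl
    intro ab _
    rw [Nat.cast_mul, card_conj_eq, coeff_Gm, coeff_Gm]
  · rw [hook_step_empty k l n (by omega)]
    have hz : (coeff n) ((X : PowerSeries ℚ) ^ (l * (k + 1)) * Gm k * Gm l) = 0 := by
      rw [mul_assoc, PowerSeries.coeff_mul]
      apply Finset.sum_eq_zero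
      intro p hp
      rw [Finset.HasAntidiagonal.mem_antidiagonal] at hp
      rw [PowerSeries.coeff_X_pow, if_neg (by omega), zero_mul]
    rw [hz]
    norm_num

end Final
end

section
/- Define A^{k,ℓ}(t) = 1 + ∑_{i=1}^{ℓ} t^{i(k+ℓ+1)} [k choose i]_t ∑_{j=0}^{ℓ-i} t^{j(k-i+1)} [(i+j-1) choose j]_t. Then A^{k,ℓ}(t) satisfies the recurrence A^{k,ℓ}(t) = (1 - t^{k+ℓ}) A^{k,ℓ-1}(t) + t^{ℓ(k+1)} [(k+ℓ) choose ℓ]_t for ℓ ≥ 1, with A^{k,0}(t) = 1. -/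
open PowerSeries Finset

/-- The `t`-Pochhammer symbol `(t;t)_n = ∏_{j=0}^{n-1} (1 - t·t^j)`. -/
noncomputable def qPoch (n : ℕ) : PowerSeries ℚ :=
  ∏ j ∈ Finset.range n, (1 - (PowerSeries.X : PowerSeries ℚ) ^ (j + 1))

/-- The Gaussian binomial coefficient `[a choose b]_t = (t;t)_a / ((t;t)_b (t;t)_{a-b})`,
with the convention that it is `0` when `b > a`. -/
noncomputable def gaussBinom (a b : ℕ) : PowerSeries ℚ :=
  if b ≤ a then qPoch a * (qPoch b)⁻¹ * (qPoch (a - b))⁻¹ else 0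

/-- `A^{k,ℓ}(t) = 1 + ∑_{i=1}^{ℓ} t^{i(k+ℓ+1)} [k choose i]_t
∑_{j=0}^{ℓ-i} t^{j(k-i+1)} [(i+j-1) choose j]_t`. -/
noncomputable def A (k l : ℕ) : PowerSeries ℚ :=
  1 + ∑ i ∈ Finset.Icc 1 l,
    (PowerSeries.X : PowerSeries ℚ) ^ (i * (k + l + 1)) * gaussBinom k i *
      ∑ j ∈ Finset.range (l - i + 1),
        (PowerSeries.X : PowerSeries ℚ) ^ (j * (k - i + 1)) * gaussBinom (i + j - 1) j


lemma qPoch_zero : qPoch 0 = 1 := by simp [qPoch]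

lemma qPoch_succ (n : ℕ) : qPoch (n+1) = qPoch n * (1 - (X:PowerSeries ℚ)^(n+1)) := by
  simp [qPoch, Finset.prod_range_succ]

lemma constCoeff_qPoch (n : ℕ) : constantCoeff (qPoch n) = 1 := by
  simp only [qPoch, map_prod, map_sub, map_one, map_pow, constantCoeff_X]
  simp

lemma qPoch_mul_inv (n : ℕ) : qPoch n * (qPoch n)⁻¹ = 1 :=
  PowerSeries.mul_inv_cancel _ (by rw [constCoeff_qPoch]; norm_num)

lemma qPoch_inv_mul (n : ℕ) : (qPoch n)⁻¹ * qPoch n = 1 :=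
  PowerSeries.inv_mul_cancel _ (by rw [constCoeff_qPoch]; norm_num)

lemma one_sub_mul_inv_qPoch_succ (n : ℕ) :
    (1 - (X:PowerSeries ℚ)^(n+1)) * (qPoch (n+1))⁻¹ = (qPoch n)⁻¹ := by
  have h : (qPoch (n+1))⁻¹ = (qPoch n)⁻¹ * (1 - (X:PowerSeries ℚ)^(n+1))⁻¹ := by
    rw [qPoch_succ, PowerSeries.mul_inv_rev]
    ring
  rw [h]
  have h2 : (1 - (X:PowerSeries ℚ)^(n+1)) * (1 - (X:PowerSeries ℚ)^(n+1))⁻¹ = 1 := by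
    apply PowerSeries.mul_inv_cancel
    simp [map_sub, map_pow, constantCoeff_X]
  calc (1 - (X:PowerSeries ℚ)^(n+1)) * ((qPoch n)⁻¹ * (1 - (X:PowerSeries ℚ)^(n+1))⁻¹)
      = (qPoch n)⁻¹ * ((1 - (X:PowerSeries ℚ)^(n+1)) * (1 - (X:PowerSeries ℚ)^(n+1))⁻¹) := by ring
    _ = (qPoch n)⁻¹ := by rw [h2, mul_one]

lemma inv_qPoch_zero : (qPoch 0)⁻¹ = 1 := by
  have := qPoch_inv_mul 0
  rwa [qPoch_zero, mul_one] at this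

lemma gb_zero (a : ℕ) : gaussBinom a 0 = 1 := by
  rw [gaussBinom, if_pos (Nat.zero_le a), inv_qPoch_zero, Nat.sub_zero, mul_one, qPoch_mul_inv]

lemma gb_self (a : ℕ) : gaussBinom a a = 1 := by
  rw [gaussBinom, if_pos le_rfl, Nat.sub_self, inv_qPoch_zero, mul_one, qPoch_mul_inv]

lemma gb_of_lt {a b : ℕ} (h : a < b) : gaussBinom a b = 0 := by
  rw [gaussBinom, if_neg (by omega)]

lemma gb_eq (a b : ℕ) (h : b ≤ a) :
    gaussBinom a b = qPoch a * (qPoch b)⁻¹ * (qPoch (a - b))⁻¹ := by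
  rw [gaussBinom, if_pos h]

-- Pascal 1 : [a+1,b+1] = [a,b+1] + X^(a-b) [a,b], universal
lemma pascal1 (a b : ℕ) :
    gaussBinom (a+1) (b+1) = gaussBinom a (b+1)
      + (X:PowerSeries ℚ)^(a-b) * gaussBinom a b := by
  rcases lt_or_ge a b with h | h
  · rw [gb_of_lt (by omega), gb_of_lt (by omega), gb_of_lt h]
    ring
  rcases eq_or_lt_of_le h with rfl | hba
  · rw [gb_self, gb_self, gb_of_lt (by omega), Nat.sub_self]
    ring
  · -- b < a : a = b + 1 + c
    obtain ⟨c, rfl⟩ : ∃ c, a = b + 1 + c := ⟨a - b - 1, by omega⟩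
    rw [gb_eq (b+1+c+1) (b+1) (by omega), gb_eq (b+1+c) (b+1) (by omega),
      gb_eq (b+1+c) b (by omega)]
    have e1 : b + 1 + c + 1 - (b + 1) = c + 1 := by omega
    have e2 : b + 1 + c - (b + 1) = c := by omega
    have e3 : b + 1 + c - b = c + 1 := by omega
    have e4 : b + 1 + c - b - 1 = c := by omega
    rw [e1, e2, e3]
    have hq : qPoch (b+1+c+1) = qPoch (b+1+c) * (1 - (X:PowerSeries ℚ)^(b+1+c+1)) :=
      qPoch_succ _
    have hc : (qPoch c)⁻¹ = (1 - (X:PowerSeries ℚ)^(c+1)) * (qPoch (c+1))⁻¹ :=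
      (one_sub_mul_inv_qPoch_succ c).symm
    have hb : (qPoch b)⁻¹ = (1 - (X:PowerSeries ℚ)^(b+1)) * (qPoch (b+1))⁻¹ :=
      (one_sub_mul_inv_qPoch_succ b).symm
    rw [hq, hc, hb]
    have hpow : (X:PowerSeries ℚ)^(b+1+c+1) = (X:PowerSeries ℚ)^(c+1) * (X:PowerSeries ℚ)^(b+1) := by
      rw [← pow_add]; ring_nf
    rw [hpow]
    ring

-- Pascal 2 : [a+1,b+1] = X^(b+1) [a,b+1] + [a,b], universal
lemma pascal2 (a b : ℕ) :
    gaussBinom (a+1) (b+1) = (X:PowerSeries ℚ)^(b+1) * gaussBinom a (b+1)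
      + gaussBinom a b := by
  rcases lt_or_ge a b with h | h
  · rw [gb_of_lt (by omega), gb_of_lt (by omega), gb_of_lt h]; ring
  rcases eq_or_lt_of_le h with rfl | hba
  · rw [gb_self, gb_self, gb_of_lt (by omega)]; ring
  · obtain ⟨c, rfl⟩ : ∃ c, a = b + 1 + c := ⟨a - b - 1, by omega⟩
    rw [gb_eq (b+1+c+1) (b+1) (by omega), gb_eq (b+1+c) (b+1) (by omega),
      gb_eq (b+1+c) b (by omega)]
    have e1 : b + 1 + c + 1 - (b + 1) = c + 1 := by omega
    have e2 : b + 1 + c - (b + 1) = c := by omega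
    have e3 : b + 1 + c - b = c + 1 := by omega
    rw [e1, e2, e3]
    have hq : qPoch (b+1+c+1) = qPoch (b+1+c) * (1 - (X:PowerSeries ℚ)^(b+1+c+1)) :=
      qPoch_succ _
    have hc : (qPoch c)⁻¹ = (1 - (X:PowerSeries ℚ)^(c+1)) * (qPoch (c+1))⁻¹ :=
      (one_sub_mul_inv_qPoch_succ c).symm
    have hb : (qPoch b)⁻¹ = (1 - (X:PowerSeries ℚ)^(b+1)) * (qPoch (b+1))⁻¹ :=
      (one_sub_mul_inv_qPoch_succ b).symm
    rw [hq, hc, hb]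
    have hpow : (X:PowerSeries ℚ)^(b+1+c+1) = (X:PowerSeries ℚ)^(c+1) * (X:PowerSeries ℚ)^(b+1) := by
      rw [← pow_add]; ring_nf
    rw [hpow]
    ring

-- (1-X^(i+1)) [k,i+1] = (1-X^k) [k-1,i], universal
lemma gb_mul1 (k i : ℕ) :
    (1 - (X:PowerSeries ℚ)^(i+1)) * gaussBinom k (i+1)
      = (1 - (X:PowerSeries ℚ)^k) * gaussBinom (k-1) i := by
  rcases Nat.eq_zero_or_pos k with rfl | hk
  · rw [gb_of_lt (by omega)]
    simp
  rcases lt_or_ge i k with hik | hik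
  · -- i + 1 ≤ k
    obtain ⟨c, rfl⟩ : ∃ c, k = i + 1 + c := ⟨k - i - 1, by omega⟩
    rw [gb_eq (i+1+c) (i+1) (by omega), gb_eq (i+1+c-1) i (by omega)]
    have e1 : i + 1 + c - (i + 1) = c := by omega
    have e2 : i + 1 + c - 1 = i + c := by omega
    have e3 : i + c - i = c := by omega
    rw [e1, e2, e3]
    have hq : qPoch (i+1+c) = qPoch (i+c) * (1 - (X:PowerSeries ℚ)^(i+c+1)) := by
      have h0 := qPoch_succ (i+c)
      rw [show i+c+1 = i+1+c from by omega] at h0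
      rw [h0, show i+1+c = i+c+1 from by omega]
    have hi : (1 - (X:PowerSeries ℚ)^(i+1)) * (qPoch (i+1))⁻¹ = (qPoch i)⁻¹ :=
      one_sub_mul_inv_qPoch_succ i
    have hpow : (X:PowerSeries ℚ)^(i+1+c) = (X:PowerSeries ℚ)^(i+c+1) := by ring_nf
    calc (1 - (X:PowerSeries ℚ)^(i+1)) * (qPoch (i+1+c) * (qPoch (i+1))⁻¹ * (qPoch c)⁻¹)
        = qPoch (i+1+c) * ((1 - (X:PowerSeries ℚ)^(i+1)) * (qPoch (i+1))⁻¹) * (qPoch c)⁻¹ := by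
          ring
      _ = qPoch (i+1+c) * (qPoch i)⁻¹ * (qPoch c)⁻¹ := by rw [hi]
      _ = (1 - (X:PowerSeries ℚ)^(i+1+c)) * (qPoch (i+c) * (qPoch i)⁻¹ * (qPoch c)⁻¹) := by
          rw [hq, hpow]; ring
  · -- k ≤ i : both sides zero
    rw [gb_of_lt (by omega), gb_of_lt (by omega)]
    ring

-- (1-X^(k-i)) [k,i] = (1-X^k) [k-1,i], universal
lemma gb_mul3 (k i : ℕ) :
    (1 - (X:PowerSeries ℚ)^(k-i)) * gaussBinom k i
      = (1 - (X:PowerSeries ℚ)^k) * gaussBinom (k-1) i := by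
  rcases lt_or_ge i k with hik | hik
  · obtain ⟨c, rfl⟩ : ∃ c, k = i + 1 + c := ⟨k - i - 1, by omega⟩
    rw [gb_eq (i+1+c) i (by omega), gb_eq (i+1+c-1) i (by omega)]
    have e1 : i + 1 + c - i = c + 1 := by omega
    have e2 : i + 1 + c - 1 = i + c := by omega
    have e3 : i + c - i = c := by omega
    rw [e1, e2, e3]
    have hq : qPoch (i+1+c) = qPoch (i+c) * (1 - (X:PowerSeries ℚ)^(i+c+1)) := by
      have h0 := qPoch_succ (i+c)
      rw [show i+c+1 = i+1+c from by omega] at h0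
      rw [h0, show i+1+c = i+c+1 from by omega]
    have hcc : (1 - (X:PowerSeries ℚ)^(c+1)) * (qPoch (c+1))⁻¹ = (qPoch c)⁻¹ :=
      one_sub_mul_inv_qPoch_succ c
    have hpow : (X:PowerSeries ℚ)^(i+1+c) = (X:PowerSeries ℚ)^(i+c+1) := by ring_nf
    calc (1 - (X:PowerSeries ℚ)^(c+1)) * (qPoch (i+1+c) * (qPoch i)⁻¹ * (qPoch (c+1))⁻¹)
        = qPoch (i+1+c) * (qPoch i)⁻¹ * ((1 - (X:PowerSeries ℚ)^(c+1)) * (qPoch (c+1))⁻¹) := by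
          ring
      _ = qPoch (i+1+c) * (qPoch i)⁻¹ * (qPoch c)⁻¹ := by rw [hcc]
      _ = (1 - (X:PowerSeries ℚ)^(i+1+c)) * (qPoch (i+c) * (qPoch i)⁻¹ * (qPoch c)⁻¹) := by
          rw [hq, hpow]; ring
  · rcases eq_or_lt_of_le hik with rfl | hki
    · rw [Nat.sub_self, pow_zero, sub_self, zero_mul]
      rcases Nat.eq_zero_or_pos k with hk0 | hpos
      · subst hk0
        simp
      · rw [gb_of_lt (show k - 1 < k by omega), mul_zero]
    · rw [gb_of_lt hki, gb_of_lt (by omega), mul_zero, mul_zero]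

noncomputable def Pa (k n d : ℕ) : PowerSeries ℚ :=
  ∑ i ∈ range n, (X:PowerSeries ℚ)^((i+1)*(i+1) + (i+1)*d) * gaussBinom k (i+1)
    * gaussBinom (n-1) (n-1-i)
noncomputable def Qa (k n d : ℕ) : PowerSeries ℚ :=
  ∑ i ∈ range n, (X:PowerSeries ℚ)^((i+1)*(i+1) + (i+1)*d) * gaussBinom (k-1) i
    * gaussBinom (n-1) (n-1-i)
noncomputable def Ra (k n d : ℕ) : PowerSeries ℚ :=
  ∑ i ∈ range (n+1), (X:PowerSeries ℚ)^(i*i + i*d) * gaussBinom k i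
    * gaussBinom n (n-i)

lemma LPQ (k n d : ℕ) : Pa k n (d+1) + (1 - (X:PowerSeries ℚ)^k) * Qa k n d = Pa k n d := by
  rw [Pa, Qa, Pa, Finset.mul_sum, ← Finset.sum_add_distrib]
  refine Finset.sum_congr rfl fun i _ => ?_
  linear_combination (-((X:PowerSeries ℚ)^((i+1)*(i+1)+(i+1)*d)
    * gaussBinom (n-1) (n-1-i))) * gb_mul1 k i


lemma LU (k : ℕ) : ∀ n d : ℕ, d ≤ n →
    ∑ i ∈ range (n - d + 1), (X:PowerSeries ℚ)^(i*i + i*d) * gaussBinom k i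
      * gaussBinom n (n-d-i) = gaussBinom (k+n) (n-d) := by
  induction k with
  | zero =>
    intro n d _
    rw [Finset.sum_eq_single_of_mem 0 (Finset.mem_range.2 (by omega))
      (fun b _ hb => by rw [gb_of_lt (show 0 < b by omega), mul_zero, zero_mul])]
    simp [gb_zero]
  | succ k IH =>
    intro n d h
    rcases eq_or_lt_of_le h with rfl | hdn
    · simp [gb_zero, gb_self]
    · have hsplit : ∀ i, (X:PowerSeries ℚ)^((i+1)*(i+1) + (i+1)*d) * gaussBinom (k+1) (i+1)
          * gaussBinom n (n-d-(i+1))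
        = (X:PowerSeries ℚ)^((i+1)*(i+1) + (i+1)*d) * gaussBinom k (i+1)
            * gaussBinom n (n-d-(i+1))
          + (X:PowerSeries ℚ)^(k+d+1) * ((X:PowerSeries ℚ)^(i*i + i*(d+1)) * gaussBinom k i
            * gaussBinom n (n-(d+1)-i)) := by
        intro i
        rcases le_or_gt i k with hik | hik
        · obtain ⟨e, rfl⟩ : ∃ e, k = i + e := ⟨k - i, by omega⟩
          rw [pascal1, show i + e - i = e from by omega,
            show n-(d+1)-i = n-d-(i+1) from by omega]
          have hexp : (X:PowerSeries ℚ)^((i+1)*(i+1) + (i+1)*d) * (X:PowerSeries ℚ)^e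
              = (X:PowerSeries ℚ)^(i+e+d+1) * (X:PowerSeries ℚ)^(i*i + i*(d+1)) := by
            rw [← pow_add, ← pow_add]
            congr 1
            ring
          calc (X:PowerSeries ℚ)^((i+1)*(i+1) + (i+1)*d)
               * (gaussBinom (i+e) (i+1) + (X:PowerSeries ℚ)^e * gaussBinom (i+e) i)
               * gaussBinom n (n-d-(i+1))
              = (X:PowerSeries ℚ)^((i+1)*(i+1) + (i+1)*d) * gaussBinom (i+e) (i+1)
                  * gaussBinom n (n-d-(i+1))
                + ((X:PowerSeries ℚ)^((i+1)*(i+1) + (i+1)*d) * (X:PowerSeries ℚ)^e)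
                  * (gaussBinom (i+e) i * gaussBinom n (n-d-(i+1))) := by ring
            _ = _ := by rw [hexp]; ring
        · rw [gb_of_lt (show k < i+1 by omega), gb_of_lt (show k+1 < i+1 by omega),
            gb_of_lt (show k < i by omega)]
          ring
      have key := IH n d h
      have key2 := IH n (d+1) (by omega)
      rw [show n-(d+1)+1 = n-d from by omega] at key2
      rw [Finset.sum_range_succ']
      rw [Finset.sum_congr rfl fun i _ => hsplit i, Finset.sum_add_distrib,
        ← Finset.mul_sum]
      have h0 : (X:PowerSeries ℚ)^(0*0+0*d) * gaussBinom (k+1) 0 * gaussBinom n (n-d-0)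
          = (X:PowerSeries ℚ)^(0*0+0*d) * gaussBinom k 0 * gaussBinom n (n-d-0) := by
        rw [gb_zero, gb_zero]
      rw [add_right_comm, h0]
      have hrec := (Finset.sum_range_succ' (fun i => (X:PowerSeries ℚ)^(i*i + i*d)
        * gaussBinom k i * gaussBinom n (n-d-i)) (n-d)).symm
      rw [hrec, key, key2]
      have hp := pascal1 (k+n) (n-d-1)
      rw [show n-d-1+1 = n-d from by omega, show k+n-(n-d-1) = k+d+1 from by omega] at hp
      rw [show k+1+n = k+n+1 from by omega, hp, show n-(d+1) = n-d-1 from by omega]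

lemma LRP (k m : ℕ) : Ra k (m+1) 0 = Pa k (m+1) 0 + Ra k m 1 := by
  rw [Ra, Finset.sum_range_succ]
  have hsplit : ∀ i ∈ range (m+1), (X:PowerSeries ℚ)^(i*i + i*0) * gaussBinom k i
      * gaussBinom (m+1) (m+1-i)
    = (X:PowerSeries ℚ)^(i*i + i*0) * gaussBinom k i * gaussBinom m (m+1-i)
      + (X:PowerSeries ℚ)^(i*i + i*1) * gaussBinom k i * gaussBinom m (m-i) := by
    intro i hi
    have hi' : i ≤ m := by simpa using Nat.lt_succ_iff.1 (Finset.mem_range.1 hi)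
    have hp := pascal1 m (m-i)
    rw [show m-i+1 = m+1-i from by omega, show m-(m-i) = i from by omega] at hp
    rw [hp]
    have : (X:PowerSeries ℚ)^(i*i+i*0) * (X:PowerSeries ℚ)^i
        = (X:PowerSeries ℚ)^(i*i+i*1) := by
      rw [← pow_add]; congr 1; ring
    calc (X:PowerSeries ℚ)^(i*i+i*0) * gaussBinom k i
          * (gaussBinom m (m+1-i) + (X:PowerSeries ℚ)^i * gaussBinom m (m-i))
        = (X:PowerSeries ℚ)^(i*i+i*0) * gaussBinom k i * gaussBinom m (m+1-i)
          + ((X:PowerSeries ℚ)^(i*i+i*0) * (X:PowerSeries ℚ)^i) * (gaussBinom k i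
            * gaussBinom m (m-i)) := by ring
      _ = _ := by rw [this]; ring
  rw [Finset.sum_congr rfl hsplit, Finset.sum_add_distrib]
  have h2 : (∑ i ∈ range (m+1), (X:PowerSeries ℚ)^(i*i + i*1) * gaussBinom k i
      * gaussBinom m (m-i)) = Ra k m 1 := rfl
  rw [h2]
  have htop : (X:PowerSeries ℚ)^((m+1)*(m+1) + (m+1)*0) * gaussBinom k (m+1)
      * gaussBinom (m+1) (m+1-(m+1))
    = (X:PowerSeries ℚ)^((m+1)*(m+1) + (m+1)*0) * gaussBinom k (m+1)
      * gaussBinom m (m+1-(m+1)) := by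
    rw [show m+1-(m+1) = 0 from by omega, gb_zero, gb_zero]
  have hPa : (∑ i ∈ range (m+1), (X:PowerSeries ℚ)^(i*i + i*0) * gaussBinom k i
        * gaussBinom m (m+1-i))
      + (X:PowerSeries ℚ)^((m+1)*(m+1) + (m+1)*0) * gaussBinom k (m+1)
        * gaussBinom m (m+1-(m+1))
      = Pa k (m+1) 0 := by
    have hs := Finset.sum_range_succ (fun i => (X:PowerSeries ℚ)^(i*i + i*0)
      * gaussBinom k i * gaussBinom m (m+1-i)) (m+1)
    rw [← hs]
    have hs' := Finset.sum_range_succ' (fun i => (X:PowerSeries ℚ)^(i*i + i*0)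
      * gaussBinom k i * gaussBinom m (m+1-i)) (m+1)
    rw [hs']
    have h00 : (X:PowerSeries ℚ)^(0*0+0*0) * gaussBinom k 0 * gaussBinom m (m+1-0) = 0 := by
      rw [gb_of_lt (show m < m+1-0 from by omega), mul_zero]
    rw [h00, add_zero, Pa]
    refine Finset.sum_congr rfl fun i hi => ?_
    simp only [Nat.add_sub_cancel]
    rw [show m-i = m+1-(i+1) from by omega]
  calc (∑ i ∈ range (m+1), (X:PowerSeries ℚ)^(i*i + i*0) * gaussBinom k i
        * gaussBinom m (m+1-i)) + Ra k m 1
      + (X:PowerSeries ℚ)^((m+1)*(m+1) + (m+1)*0) * gaussBinom k (m+1)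
        * gaussBinom (m+1) (m+1-(m+1))
      = ((∑ i ∈ range (m+1), (X:PowerSeries ℚ)^(i*i + i*0) * gaussBinom k i
        * gaussBinom m (m+1-i))
      + (X:PowerSeries ℚ)^((m+1)*(m+1) + (m+1)*0) * gaussBinom k (m+1)
        * gaussBinom m (m+1-(m+1))) + Ra k m 1 := by rw [← htop]; ring
    _ = Pa k (m+1) 0 + Ra k m 1 := by rw [hPa]

lemma LIII (k m d : ℕ) :
    (X:PowerSeries ℚ)^((m+1)*(k+1) + (k+m+d+2)) * Pa k (m+1) d
      + (X:PowerSeries ℚ)^((k+m+d+2) + m*k) * Ra k m (d+2)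
    = (X:PowerSeries ℚ)^((m+1)*(k+1)) * ((1 - (X:PowerSeries ℚ)^k) * Qa k (m+1) d)
      + (X:PowerSeries ℚ)^((k+m+d+2) + (m+1)*k) * Ra k (m+1) (d+1) := by
  set E := k + m + d + 2 with hE
  -- the two auxiliary sums
  set T : PowerSeries ℚ := ∑ i ∈ range (m+1),
    (X:PowerSeries ℚ)^(E + (m+1)*k + (i*i + i*(d+1))) * gaussBinom k i
      * gaussBinom m (m-i) with hT
  set S : PowerSeries ℚ := ∑ i ∈ range (m+1),
    (X:PowerSeries ℚ)^(E + m*k + (i*i + i*(d+2))) * ((1 - (X:PowerSeries ℚ)^k)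
      * gaussBinom (k-1) i) * gaussBinom m (m-i) with hS
  have hA : (X:PowerSeries ℚ)^(E + (m+1)*k) * Ra k (m+1) (d+1)
      = (X:PowerSeries ℚ)^((m+1)*(k+1) + E) * Pa k (m+1) d + T := by
    rw [Ra, Finset.mul_sum]
    -- split top term i = m+1
    rw [Finset.sum_range_succ]
    have hterm : ∀ i ∈ range (m+1),
        (X:PowerSeries ℚ)^(E + (m+1)*k) * ((X:PowerSeries ℚ)^(i*i + i*(d+1))
          * gaussBinom k i * gaussBinom (m+1) (m+1-i))
        = (X:PowerSeries ℚ)^((m+1)*(k+1) + E + (i*i + i*d)) * gaussBinom k i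
            * gaussBinom m (m+1-i)
          + (X:PowerSeries ℚ)^(E + (m+1)*k + (i*i + i*(d+1))) * gaussBinom k i
            * gaussBinom m (m-i) := by
      intro i hi
      have him : i ≤ m := Nat.lt_succ_iff.1 (Finset.mem_range.1 hi)
      have hp := pascal2 m (m-i)
      rw [show m-i+1 = m+1-i from by omega] at hp
      rw [hp]
      obtain ⟨e, he⟩ : ∃ e, m+1 = i + e := ⟨m+1-i, by omega⟩
      have hx1 : (X:PowerSeries ℚ)^(E + (m+1)*k) * (X:PowerSeries ℚ)^(i*i + i*(d+1))
          * (X:PowerSeries ℚ)^(m+1-i)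
          = (X:PowerSeries ℚ)^((m+1)*(k+1) + E + (i*i + i*d)) := by
        rw [← pow_add, ← pow_add]
        congr 1
        rw [show m+1-i = e from by omega, show m+1 = i+e from he]
        ring
      have hx2 : (X:PowerSeries ℚ)^(E + (m+1)*k) * (X:PowerSeries ℚ)^(i*i + i*(d+1))
          = (X:PowerSeries ℚ)^(E + (m+1)*k + (i*i + i*(d+1))) := by
        rw [← pow_add]
      calc (X:PowerSeries ℚ)^(E + (m+1)*k) * ((X:PowerSeries ℚ)^(i*i + i*(d+1))
            * gaussBinom k i * ((X:PowerSeries ℚ)^(m+1-i) * gaussBinom m (m+1-i)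
              + gaussBinom m (m-i)))
          = ((X:PowerSeries ℚ)^(E + (m+1)*k) * (X:PowerSeries ℚ)^(i*i + i*(d+1))
              * (X:PowerSeries ℚ)^(m+1-i)) * gaussBinom k i * gaussBinom m (m+1-i)
            + ((X:PowerSeries ℚ)^(E + (m+1)*k) * (X:PowerSeries ℚ)^(i*i + i*(d+1)))
              * gaussBinom k i * gaussBinom m (m-i) := by ring
        _ = _ := by rw [hx1, hx2]
    rw [Finset.sum_congr rfl hterm, Finset.sum_add_distrib]
    -- now reassemble the first sum plus top term into the Pa part
    have htop : (X:PowerSeries ℚ)^(E + (m+1)*k) * ((X:PowerSeries ℚ)^((m+1)*(m+1)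
          + (m+1)*(d+1)) * gaussBinom k (m+1) * gaussBinom (m+1) (m+1-(m+1)))
        = (X:PowerSeries ℚ)^((m+1)*(k+1) + E + ((m+1)*(m+1) + (m+1)*d))
          * gaussBinom k (m+1) * gaussBinom m (m+1-(m+1)) := by
      rw [show m+1-(m+1) = 0 from by omega, gb_zero, gb_zero]
      have hxx : (X:PowerSeries ℚ)^(E + (m+1)*k)
            * (X:PowerSeries ℚ)^((m+1)*(m+1) + (m+1)*(d+1))
          = (X:PowerSeries ℚ)^((m+1)*(k+1) + E + ((m+1)*(m+1) + (m+1)*d)) := by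
        rw [← pow_add]
        congr 1
        ring
      linear_combination gaussBinom k (m+1) * hxx
    rw [htop]
    have hPa : (∑ i ∈ range (m+1), (X:PowerSeries ℚ)^((m+1)*(k+1) + E + (i*i + i*d))
          * gaussBinom k i * gaussBinom m (m+1-i))
        + (X:PowerSeries ℚ)^((m+1)*(k+1) + E + ((m+1)*(m+1) + (m+1)*d))
          * gaussBinom k (m+1) * gaussBinom m (m+1-(m+1))
        = (X:PowerSeries ℚ)^((m+1)*(k+1) + E) * Pa k (m+1) d := by
      have hs := Finset.sum_range_succ (fun i => (X:PowerSeries ℚ)^((m+1)*(k+1) + E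
        + (i*i + i*d)) * gaussBinom k i * gaussBinom m (m+1-i)) (m+1)
      rw [← hs]
      have hs' := Finset.sum_range_succ' (fun i => (X:PowerSeries ℚ)^((m+1)*(k+1) + E
        + (i*i + i*d)) * gaussBinom k i * gaussBinom m (m+1-i)) (m+1)
      rw [hs']
      have h00 : (X:PowerSeries ℚ)^((m+1)*(k+1) + E + (0*0+0*d)) * gaussBinom k 0
          * gaussBinom m (m+1-0) = 0 := by
        rw [gb_of_lt (show m < m+1-0 from by omega), mul_zero]
      rw [h00, add_zero, Pa, Finset.mul_sum]
      refine Finset.sum_congr rfl fun i hi => ?_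
      simp only [Nat.add_sub_cancel]
      rw [show m+1-(i+1) = m-i from by omega, pow_add]
      ring
    rw [add_right_comm, hPa]
  have hBC : (X:PowerSeries ℚ)^(E + m*k) * Ra k m (d+2) = T + S := by
    rw [Ra, Finset.mul_sum, hT, hS, ← Finset.sum_add_distrib]
    refine Finset.sum_congr rfl fun i hi => ?_
    rcases le_or_gt i k with hik | hik
    · obtain ⟨e, rfl⟩ : ∃ e, k = i + e := ⟨k - i, by omega⟩
      have hg := gb_mul3 (i+e) i
      rw [show i+e-i = e from by omega] at hg
      have hx1 : (X:PowerSeries ℚ)^(E + (m+1)*(i+e) + (i*i + i*(d+1)))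
          = (X:PowerSeries ℚ)^(E + m*(i+e) + (i*i + i*(d+2))) * (X:PowerSeries ℚ)^e := by
        rw [← pow_add]
        congr 1
        ring
      have hx2 : (X:PowerSeries ℚ)^(E + m*(i+e)) * (X:PowerSeries ℚ)^(i*i + i*(d+2))
          = (X:PowerSeries ℚ)^(E + m*(i+e) + (i*i + i*(d+2))) := by rw [← pow_add]
      rw [hx1]
      linear_combination ((X:PowerSeries ℚ)^(E + m*(i+e) + (i*i + i*(d+2)))
        * gaussBinom m (m-i)) * hg
        + gaussBinom (i+e) i * gaussBinom m (m-i) * hx2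
    · rw [gb_of_lt hik, gb_of_lt (show k-1 < i from by omega)]
      ring
  have hD : S = (X:PowerSeries ℚ)^((m+1)*(k+1)) * ((1 - (X:PowerSeries ℚ)^k)
      * Qa k (m+1) d) := by
    rw [hS, Qa, Finset.mul_sum, Finset.mul_sum]
    refine Finset.sum_congr rfl fun i hi => ?_
    simp only [Nat.add_sub_cancel]
    have hx : (X:PowerSeries ℚ)^(E + m*k + (i*i + i*(d+2)))
        = (X:PowerSeries ℚ)^((m+1)*(k+1)) * (X:PowerSeries ℚ)^((i+1)*(i+1)+(i+1)*d) := by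
      rw [← pow_add]
      congr 1
      rw [hE]
      ring
    rw [hx]
    ring
  linear_combination hBC + hD - hA

lemma LA (k l : ℕ) :
    A k l = 1 + ∑ n ∈ Icc 1 l, (X:PowerSeries ℚ)^(n*(k+1)) * Pa k n (l-n) := by
  rw [A]
  congr 1
  calc ∑ i ∈ Icc 1 l, (X:PowerSeries ℚ)^(i*(k+l+1)) * gaussBinom k i
        * ∑ j ∈ range (l-i+1), (X:PowerSeries ℚ)^(j*(k-i+1)) * gaussBinom (i+j-1) j
      = ∑ i ∈ Icc 1 l, ∑ j ∈ range (l-i+1), (X:PowerSeries ℚ)^(i*(k+l+1))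
          * gaussBinom k i * ((X:PowerSeries ℚ)^(j*(k-i+1)) * gaussBinom (i+j-1) j) := by
        exact Finset.sum_congr rfl fun i _ => Finset.mul_sum _ _ _
    _ = ∑ p ∈ (Icc 1 l).sigma (fun i => range (l-i+1)), (X:PowerSeries ℚ)^(p.1*(k+l+1))
          * gaussBinom k p.1 * ((X:PowerSeries ℚ)^(p.2*(k-p.1+1))
            * gaussBinom (p.1+p.2-1) p.2) := by
        rw [Finset.sum_sigma']
    _ = ∑ p ∈ (Icc 1 l).sigma (fun n => range n), (X:PowerSeries ℚ)^(p.1*(k+1))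
          * ((X:PowerSeries ℚ)^((p.2+1)*(p.2+1) + (p.2+1)*(l-p.1))
            * gaussBinom k (p.2+1) * gaussBinom (p.1-1) (p.1-1-p.2)) := by
        refine Finset.sum_nbij' (fun p => ⟨p.1+p.2, p.1-1⟩) (fun p => ⟨p.2+1, p.1-p.2-1⟩)
          ?_ ?_ ?_ ?_ ?_
        · rintro ⟨x, y⟩ hp
          simp only [Finset.mem_sigma, Finset.mem_Icc, Finset.mem_range] at hp ⊢
          omega
        · rintro ⟨x, y⟩ hp
          simp only [Finset.mem_sigma, Finset.mem_Icc, Finset.mem_range] at hp ⊢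
          omega
        · rintro ⟨x, y⟩ hp
          simp only [Finset.mem_sigma, Finset.mem_Icc, Finset.mem_range] at hp
          refine Sigma.ext ?_ (heq_of_eq ?_) <;> dsimp only <;> omega
        · rintro ⟨x, y⟩ hp
          simp only [Finset.mem_sigma, Finset.mem_Icc, Finset.mem_range] at hp
          refine Sigma.ext ?_ (heq_of_eq ?_) <;> dsimp only <;> omega
        · rintro ⟨x, y⟩ hp
          simp only [Finset.mem_sigma, Finset.mem_Icc, Finset.mem_range] at hp
          obtain ⟨⟨hx1, hx2⟩, hy⟩ := hp
          dsimp only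
          rw [show x - 1 + 1 = x from by omega, show x + y - 1 - (x - 1) = y from by omega]
          rcases le_or_gt x k with hxk | hxk
          · obtain ⟨a, rfl⟩ : ∃ a, k = x + a := ⟨k - x, by omega⟩
            obtain ⟨b, hb⟩ : ∃ b, l = x + y + b := ⟨l - (x+y), by omega⟩
            rw [show x + a - x + 1 = a + 1 from by omega, show l - (x+y) = b from by omega]
            have hx1' : (X:PowerSeries ℚ)^(x*(x+a+l+1)) * (X:PowerSeries ℚ)^(y*(a+1))
                = (X:PowerSeries ℚ)^((x+y)*(x+a+1)) * (X:PowerSeries ℚ)^(x*x + x*b) := by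
              rw [← pow_add, ← pow_add]
              congr 1
              rw [hb]
              ring
            linear_combination (gaussBinom (x+a) x * gaussBinom (x+y-1) y) * hx1'
          · rw [gb_of_lt hxk]
            ring
    _ = ∑ n ∈ Icc 1 l, ∑ i ∈ range n, (X:PowerSeries ℚ)^(n*(k+1))
          * ((X:PowerSeries ℚ)^((i+1)*(i+1) + (i+1)*(l-n))
            * gaussBinom k (i+1) * gaussBinom (n-1) (n-1-i)) := by
        rw [Finset.sum_sigma']
    _ = ∑ n ∈ Icc 1 l, (X:PowerSeries ℚ)^(n*(k+1)) * Pa k n (l-n) := by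
        exact Finset.sum_congr rfl fun n _ => (Finset.mul_sum _ _ _).symm

lemma icc_to_range (N : ℕ) (f : ℕ → PowerSeries ℚ) :
    ∑ n ∈ Icc 1 N, f n = ∑ j ∈ range N, f (j+1) := by
  rw [← Finset.Ico_add_one_right_eq_Icc, Finset.sum_Ico_eq_sum_range]
  refine Finset.sum_congr (by congr 1) fun j _ => by rw [Nat.add_comm 1 j]


theorem stmt7 (k : ℕ) :
    A k 0 = 1 ∧
    ∀ l : ℕ, 1 ≤ l →
      A k l = (1 - (PowerSeries.X : PowerSeries ℚ) ^ (k + l)) * A k (l - 1)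
        + (PowerSeries.X : PowerSeries ℚ) ^ (l * (k + 1)) * gaussBinom (k + l) l := by
  constructor
  · simp [A]
  intro l hl
  obtain ⟨m, rfl⟩ : ∃ m, l = m + 1 := ⟨l - 1, by omega⟩
  simp only [Nat.add_sub_cancel]
  -- rewrite both A's
  have hA1 : A k (m+1) = 1 + ∑ j ∈ range (m+1),
      (X:PowerSeries ℚ)^((j+1)*(k+1)) * Pa k (j+1) (m-j) := by
    rw [LA, icc_to_range (m+1) (fun n => (X:PowerSeries ℚ)^(n*(k+1)) * Pa k n (m+1-n))]
    congr 1
    exact Finset.sum_congr rfl fun j _ => by rw [show m+1-(j+1) = m-j from by omega]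
  have hA2 : A k m = 1 + ∑ j ∈ range m,
      (X:PowerSeries ℚ)^((j+1)*(k+1)) * Pa k (j+1) (m-(j+1)) := by
    rw [LA, icc_to_range m (fun n => (X:PowerSeries ℚ)^(n*(k+1)) * Pa k n (m-n))]
  rw [hA1, hA2]
  -- abbreviations are spelled out; main hypotheses
  have h1 : ∑ j ∈ range (m+1), (X:PowerSeries ℚ)^((j+1)*(k+1)) * Pa k (j+1) (m-j)
      = (∑ j ∈ range m, (X:PowerSeries ℚ)^((j+1)*(k+1)) * Pa k (j+1) (m-j))
        + (X:PowerSeries ℚ)^((m+1)*(k+1)) * Pa k (m+1) (m-m) :=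
    Finset.sum_range_succ _ m
  have h9 : (X:PowerSeries ℚ)^((m+1)*(k+1)) * Pa k (m+1) (m-m)
      = (X:PowerSeries ℚ)^((m+1)*(k+1)) * Pa k (m+1) 0 := by
    rw [Nat.sub_self]
  have h2 : (∑ j ∈ range m, (X:PowerSeries ℚ)^((j+1)*(k+1)) * Pa k (j+1) (m-j))
      + (∑ j ∈ range m, (X:PowerSeries ℚ)^((j+1)*(k+1)+(k+m+1)) * Pa k (j+1) (m-(j+1)))
      + (∑ j ∈ range m, (X:PowerSeries ℚ)^(k+m+1+j*k) * Ra k j (m-j+1))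
      = (∑ j ∈ range m, (X:PowerSeries ℚ)^((j+1)*(k+1)) * Pa k (j+1) (m-(j+1)))
      + (∑ j ∈ range m, (X:PowerSeries ℚ)^(k+m+1+(j+1)*k) * Ra k (j+1) (m-j)) := by
    rw [← Finset.sum_add_distrib, ← Finset.sum_add_distrib, ← Finset.sum_add_distrib]
    refine Finset.sum_congr rfl fun j hj => ?_
    have hjm : j < m := Finset.mem_range.1 hj
    have hlpq := LPQ k (j+1) (m-j-1)
    rw [show m-j-1+1 = m-j from by omega] at hlpq
    have hliii := LIII k j (m-j-1)
    rw [show k+j+(m-j-1)+2 = k+m+1 from by omega, show m-j-1+2 = m-j+1 from by omega,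
      show m-j-1+1 = m-j from by omega] at hliii
    rw [show m-(j+1) = m-j-1 from by omega]
    linear_combination ((X:PowerSeries ℚ)^((j+1)*(k+1))) * hlpq + hliii
  have h3 : (∑ j ∈ range m, (X:PowerSeries ℚ)^((j+1)*(k+1)+(k+m+1)) * Pa k (j+1) (m-(j+1)))
      = (X:PowerSeries ℚ)^(k+m+1)
        * ∑ j ∈ range m, (X:PowerSeries ℚ)^((j+1)*(k+1)) * Pa k (j+1) (m-(j+1)) := by
    rw [Finset.mul_sum]
    refine Finset.sum_congr rfl fun j _ => ?_
    rw [pow_add]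
    ring
  have h4 : (∑ j ∈ range m, (X:PowerSeries ℚ)^(k+m+1+j*k) * Ra k j (m-j+1))
        + (X:PowerSeries ℚ)^(k+m+1+m*k) * Ra k m (m-m+1)
      = (∑ j ∈ range m, (X:PowerSeries ℚ)^(k+m+1+(j+1)*k) * Ra k (j+1) (m-j))
        + (X:PowerSeries ℚ)^(k+m+1+0*k) * Ra k 0 (m-0+1) := by
    have t1 := Finset.sum_range_succ
      (fun j => (X:PowerSeries ℚ)^(k+m+1+j*k) * Ra k j (m-j+1)) m
    have t2 := Finset.sum_range_succ'
      (fun j => (X:PowerSeries ℚ)^(k+m+1+j*k) * Ra k j (m-j+1)) m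
    rw [← t1, t2]
    congr 1
    refine Finset.sum_congr rfl fun j hj => ?_
    have hjm : j < m := Finset.mem_range.1 hj
    rw [show m-(j+1)+1 = m-j from by omega]
  have h5 : (X:PowerSeries ℚ)^(k+m+1+0*k) * Ra k 0 (m-0+1) = (X:PowerSeries ℚ)^(k+m+1) := by
    rw [Ra]
    simp [gb_zero]
  have h6 : (X:PowerSeries ℚ)^(k+m+1+m*k) * Ra k m (m-m+1)
      = (X:PowerSeries ℚ)^((m+1)*(k+1)) * Ra k m 1 := by
    rw [Nat.sub_self, show k+m+1+m*k = (m+1)*(k+1) from by ring]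
  have h7 : Ra k (m+1) 0 = Pa k (m+1) 0 + Ra k m 1 := LRP k m
  have h8 : Ra k (m+1) 0 = gaussBinom (k+(m+1)) (m+1) := by
    have hlu := LU k (m+1) 0 (by omega)
    simp only [Nat.sub_zero] at hlu
    rw [Ra]
    exact hlu
  linear_combination h1 + h9 + h2 - h3 - h4 - h5 + h6
    + ((X:PowerSeries ℚ)^((m+1)*(k+1))) * (h8 - h7)
end

section
/- For ℓ ≥ 1, there is a size-respecting bijection between partitions fitting inside the (k,ℓ)-hook containing the cell (k+1,ℓ) and pairs (μ,ν) where μ has at most k parts and ν has at most ℓ parts; the bijection subtracts the ℓ×(k+1) rectangle appropriately, so the generating function for such partitions is t^{ℓ(k+1)} G_k(t) G_ℓ(t). -/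
open PowerSeries Finset

/-- `λ` contains the cell `(k+1, ℓ)` iff `λ_{k+1} ≥ ℓ`, i.e. at least `k+1` parts are `≥ ℓ`. -/
def ContainsCell (k l : ℕ) {n : ℕ} (p : Nat.Partition n) : Prop :=
  k + 1 ≤ (p.parts.filter (fun x => l ≤ x)).card

namespace Stmt12Aux

open Multiset YoungDiagram

/-! ### Conjugation of partitions via Young diagrams -/

theorem list_sum_range_map (f : ℕ → ℕ) (n : ℕ) :
    ((List.range n).map f).sum = ∑ i ∈ Finset.range n, f i := by
  simp [Finset.sum_eq_multiset_sum, Finset.range, Multiset.range]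

theorem sum_rowLens' (μ : YoungDiagram) : μ.rowLens.sum = μ.cells.card := by
  rw [Finset.card_eq_sum_card_fiberwise (f := Prod.fst) (t := Finset.range (μ.colLen 0))
    (fun c hc => by
      simp only [Finset.mem_coe, Finset.mem_range, ← mem_iff_lt_colLen]
      exact μ.up_left_mem le_rfl (Nat.zero_le _) hc)]
  rw [YoungDiagram.rowLens, list_sum_range_map]
  apply Finset.sum_congr rfl
  intro i _
  rw [rowLen_eq_card]
  congr 1

theorem card_transpose' (μ : YoungDiagram) : μ.transpose.cells.card = μ.cells.card := by
  simp [YoungDiagram.transpose]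

/-- diagram of a partition -/
def diagOf {n : ℕ} (p : Nat.Partition n) : YoungDiagram :=
  ofRowLens (p.parts.sort (· ≥ ·)) (p.parts.pairwise_sort _).sortedGE

theorem diagOf_rowLens {n : ℕ} (p : Nat.Partition n) :
    (diagOf p).rowLens = p.parts.sort (· ≥ ·) :=
  rowLens_ofRowLens_eq_self (fun x hx => p.parts_pos (by
    rw [← Multiset.mem_sort (· ≥ ·)]; exact hx))

theorem diagOf_congr {n m : ℕ} {p : Nat.Partition n} {q : Nat.Partition m}
    (h : p.parts = q.parts) : diagOf p = diagOf q := by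
  ext ⟨i, j⟩
  simp [diagOf, mem_ofRowLens, h]

theorem diagOf_card {n : ℕ} (p : Nat.Partition n) : (diagOf p).cells.card = n := by
  rw [← sum_rowLens', diagOf_rowLens, ← Multiset.sum_coe, Multiset.sort_eq, p.parts_sum]

/-- conjugate partition -/
def conjP {n : ℕ} (p : Nat.Partition n) : Nat.Partition n where
  parts := ((diagOf p).transpose.rowLens : Multiset ℕ)
  parts_pos := fun hi => pos_of_mem_rowLens _ _ hi
  parts_sum := by
    rw [Multiset.sum_coe, sum_rowLens', card_transpose', diagOf_card]

theorem parts_conjP {n : ℕ} (p : Nat.Partition n) :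
    (conjP p).parts = ((diagOf p).transpose.rowLens : Multiset ℕ) := rfl

theorem diagOf_conjP {n : ℕ} (p : Nat.Partition n) :
    diagOf (conjP p) = (diagOf p).transpose := by
  rw [diagOf]
  have h1 : (conjP p).parts.sort (· ≥ ·) = (diagOf p).transpose.rowLens := by
    apply List.Perm.eq_of_sortedGE (Multiset.pairwise_sort _ _).sortedGE (rowLens_sorted _)
    rw [← Multiset.coe_eq_coe, Multiset.sort_eq, parts_conjP]
  rw [show (ofRowLens ((conjP p).parts.sort (· ≥ ·)) (Multiset.pairwise_sort _ _).sortedGE) =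
      ofRowLens _ (rowLens_sorted (diagOf p).transpose) from by congr 1]
  exact ofRowLens_to_rowLens_eq_self

theorem conjP_conjP {n : ℕ} (p : Nat.Partition n) : conjP (conjP p) = p := by
  apply Nat.Partition.ext
  rw [parts_conjP, diagOf_conjP, transpose_transpose, diagOf_rowLens, Multiset.sort_eq]

theorem conjP_parts_congr {n m : ℕ} {p : Nat.Partition n} {q : Nat.Partition m}
    (h : p.parts = q.parts) : (conjP p).parts = (conjP q).parts := by
  rw [parts_conjP, parts_conjP, diagOf_congr h]

theorem rowLen_zero_le {n : ℕ} (p : Nat.Partition n) (m : ℕ)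
    (h : ∀ x ∈ p.parts, x ≤ m) : (diagOf p).rowLen 0 ≤ m := by
  rcases Nat.eq_zero_or_pos ((diagOf p).colLen 0) with h0 | h0
  · have : (0, 0) ∉ diagOf p := by rw [mem_iff_lt_colLen, h0]; omega
    rw [mem_iff_lt_rowLen] at this
    omega
  · apply h
    rw [← Multiset.mem_sort (· ≥ ·), ← diagOf_rowLens, YoungDiagram.rowLens]
    exact List.mem_map_of_mem (List.mem_range.2 h0)

theorem card_conjP_le {n : ℕ} (p : Nat.Partition n) (m : ℕ)
    (h : ∀ x ∈ p.parts, x ≤ m) : (conjP p).parts.card ≤ m := by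
  rw [parts_conjP, Multiset.coe_card, length_rowLens, colLen_transpose]
  exact rowLen_zero_le p m h

theorem parts_conjP_le {n : ℕ} (p : Nat.Partition n) :
    ∀ x ∈ (conjP p).parts, x ≤ p.parts.card := by
  intro x hx
  rw [parts_conjP, Multiset.mem_coe, YoungDiagram.rowLens, List.mem_map] at hx
  obtain ⟨i, _, rfl⟩ := hx
  calc (diagOf p).transpose.rowLen i ≤ (diagOf p).transpose.rowLen 0 :=
        rowLen_anti _ 0 i (Nat.zero_le _)
    _ = (diagOf p).colLen 0 := rowLen_transpose _ _
    _ = p.parts.card := by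
        rw [← length_rowLens, diagOf_rowLens, Multiset.length_sort]

/-! ### Multiset lemmas -/

theorem sigma_partition_ext {x y : Σ n : ℕ, Nat.Partition n} (h : x.2.parts = y.2.parts) :
    x = y := by
  obtain ⟨n, p⟩ := x
  obtain ⟨m, q⟩ := y
  simp only at h
  obtain rfl : n = m := by rw [← p.parts_sum, ← q.parts_sum, h]
  exact congrArg (Sigma.mk n) (Nat.Partition.ext h)

/-- Build a partition from a multiset of positive naturals. -/
def ofMS (s : Multiset ℕ) (h : ∀ x ∈ s, 0 < x) : Nat.Partition s.sum :=
  ⟨s, fun {i} hi => h i hi, rfl⟩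

theorem ofMS_parts (s : Multiset ℕ) (h : ∀ x ∈ s, 0 < x) : (ofMS s h).parts = s := rfl

variable {k l : ℕ}

theorem count_ineq (s : Multiset ℕ) (h2 : k + 1 ≤ (s.filter (fun x => l ≤ x)).card) :
    k + 1 ≤ (s.filter (fun x => l < x)).card + count l s := by
  have hsplit := Multiset.filter_add_filter (fun x => l < x) (fun x => x = l) s
  have h0 : s.filter (fun x => l < x ∧ x = l) = 0 := by
    rw [Multiset.filter_eq_nil]; rintro a ha ⟨h', rfl⟩; exact absurd h' (lt_irrefl _)
  have hle : s.filter (fun x => l < x ∨ x = l) = s.filter (fun x => l ≤ x) := by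
    apply Multiset.filter_congr; intro x _; constructor
    · rintro (h | rfl); exact le_of_lt h; rfl
    · intro h; rcases lt_or_eq_of_le h with h' | h'; exact Or.inl h'; exact Or.inr h'.symm
  have hcount : count l s = (s.filter (fun x => x = l)).card := by
    rw [Multiset.count_eq_card_filter_eq]; congr 1; apply Multiset.filter_congr
    intro x _; exact eq_comm
  have := congrArg Multiset.card hsplit
  rw [Multiset.card_add, hle, h0, Multiset.card_add] at this
  simp only [Multiset.card_zero, add_zero] at this
  omega

theorem repl_le (s : Multiset ℕ)
    (hc : k + 1 ≤ (s.filter (fun x => l < x)).card + count l s) :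
    replicate (k + 1 - (s.filter (fun x => l < x)).card) l ≤ s.filter (fun x => ¬ l < x) := by
  rw [← Multiset.le_count_iff_replicate_le,
    Multiset.count_filter_of_pos (p := fun x => ¬ l < x) (lt_irrefl l)]
  omega

theorem sum_map_sub (s : Multiset ℕ) (h : ∀ x ∈ s, l ≤ x) :
    (s.map (fun x => x - l)).sum = s.sum - l * s.card := by
  induction s using Multiset.induction_on with
  | empty => simp
  | cons a t ih =>
    have ha : l ≤ a := h a (mem_cons_self a t)
    have hs : l * t.card ≤ t.sum := by
      have := Multiset.card_nsmul_le_sum (fun x hx => h x (mem_cons_of_mem hx))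
      rwa [smul_eq_mul, mul_comm] at this
    rw [Multiset.map_cons, Multiset.sum_cons, Multiset.sum_cons,
      ih (fun x hx => h x (mem_cons_of_mem hx)), Multiset.card_cons, mul_add, mul_one]
    omega

/-! ### The hook bijection -/

variable (k l) in
/-- Source type. -/
abbrev S := {pp : Σ n : ℕ, Nat.Partition n // InHook k l pp.2 ∧ ContainsCell k l pp.2}

variable (k l) in
/-- Target type. -/
abbrev T := {qq : (Σ m : ℕ, Nat.Partition m) × (Σ r : ℕ, Nat.Partition r) //
    qq.1.2.parts.card ≤ k ∧ qq.2.2.parts.card ≤ l}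

theorem muPos (s : Multiset ℕ) :
    ∀ y ∈ (s.filter (fun x => l < x)).map (fun x => x - l), 0 < y := by
  intro y hy
  rcases Multiset.mem_map.1 hy with ⟨a, ha, rfl⟩
  have := Multiset.of_mem_filter ha
  omega

theorem nuMem {s t : Multiset ℕ} {y : ℕ}
    (hy : y ∈ s.filter (fun x => ¬ l < x) - t) : y ∈ s ∧ y ≤ l := by
  have h1 : y ∈ s.filter (fun x => ¬ l < x) :=
    Multiset.mem_of_le (tsub_le_self) hy
  exact ⟨Multiset.mem_of_le (Multiset.filter_le _ _) h1,
    le_of_not_gt (Multiset.mem_filter.1 h1).2⟩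

variable (k l) in
def fwd (x : S k l) : T k l :=
  ⟨(⟨_, ofMS ((x.1.2.parts.filter (fun x => l < x)).map (fun x => x - l)) (muPos _)⟩,
    ⟨_, conjP (ofMS
      (x.1.2.parts.filter (fun x => ¬ l < x)
        - replicate (k + 1 - (x.1.2.parts.filter (fun x => l < x)).card) l)
      (fun y hy => x.1.2.parts_pos (nuMem hy).1))⟩),
   by
    simpa [ofMS, InHook] using x.2.1,
   card_conjP_le _ _ (fun y hy => (nuMem hy).2)⟩

theorem lamPos {μw w : Multiset ℕ} (hl : 1 ≤ l) (hμ : ∀ x ∈ μw, 0 < x)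
    (hw : ∀ x ∈ w, 0 < x) (c : ℕ) :
    ∀ y ∈ μw.map (fun x => x + l) + (replicate c l + w), 0 < y := by
  intro y hy
  rcases Multiset.mem_add.1 hy with h | h
  · rcases Multiset.mem_map.1 h with ⟨a, _, rfl⟩; omega
  · rcases Multiset.mem_add.1 h with h | h
    · rw [Multiset.eq_of_mem_replicate h]; omega
    · exact hw _ h

theorem filter_gt_lam {μw w : Multiset ℕ} (hμ : ∀ x ∈ μw, 0 < x) (hw : ∀ x ∈ w, x ≤ l)
    (c : ℕ) :
    (μw.map (fun x => x + l) + (replicate c l + w)).filter (fun x => l < x)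
      = μw.map (fun x => x + l) := by
  rw [Multiset.filter_add, Multiset.filter_add,
    Multiset.filter_eq_self.2 (by
      intro y hy; rcases Multiset.mem_map.1 hy with ⟨a, ha, rfl⟩
      have := hμ a ha; omega),
    Multiset.filter_eq_nil.2 (by
      intro y hy; rw [Multiset.eq_of_mem_replicate hy]; omega),
    Multiset.filter_eq_nil.2 (by intro y hy; have := hw y hy; omega)]
  simp

theorem filter_le_lam {μw w : Multiset ℕ} (hμ : ∀ x ∈ μw, 0 < x) (hw : ∀ x ∈ w, x ≤ l)
    (c : ℕ) :
    (μw.map (fun x => x + l) + (replicate c l + w)).filter (fun x => ¬ l < x)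
      = replicate c l + w := by
  rw [Multiset.filter_add, Multiset.filter_add,
    Multiset.filter_eq_nil.2 (by
      intro y hy; rcases Multiset.mem_map.1 hy with ⟨a, ha, rfl⟩
      have := hμ a ha; omega),
    Multiset.filter_eq_self.2 (by
      intro y hy; rw [Multiset.eq_of_mem_replicate hy]; omega),
    Multiset.filter_eq_self.2 (by intro y hy; have := hw y hy; omega)]
  simp

variable (k l) in
def bwd (hl : 1 ≤ l) (y : T k l) : S k l := by
  refine ⟨⟨_, ofMS
    (y.1.1.2.parts.map (fun x => x + l)
      + (replicate (k + 1 - y.1.1.2.parts.card) l + (conjP y.1.2.2).parts))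
    (lamPos hl (fun x hx => y.1.1.2.parts_pos hx)
      (fun x hx => (conjP y.1.2.2).parts_pos hx) _)⟩, ?_, ?_⟩
  · -- InHook
    rw [InHook, ofMS_parts, filter_gt_lam (fun x hx => y.1.1.2.parts_pos hx)
      (fun x hx => le_trans (parts_conjP_le _ _ hx) y.2.2) _, Multiset.card_map]
    exact y.2.1
  · -- ContainsCell
    rw [ContainsCell, ofMS_parts]
    have hsub : (y.1.1.2.parts.map (fun x => x + l) + replicate (k + 1 - y.1.1.2.parts.card) l)
        ≤ (y.1.1.2.parts.map (fun x => x + l)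
          + (replicate (k + 1 - y.1.1.2.parts.card) l + (conjP y.1.2.2).parts)) := by
      rw [← add_assoc]
      exact Multiset.le_add_right _ _
    have h1 : (y.1.1.2.parts.map (fun x => x + l)
        + replicate (k + 1 - y.1.1.2.parts.card) l).filter (fun x => l ≤ x)
        = y.1.1.2.parts.map (fun x => x + l) + replicate (k + 1 - y.1.1.2.parts.card) l := by
      rw [Multiset.filter_eq_self]
      intro y' hy'
      rcases Multiset.mem_add.1 hy' with h | h
      · rcases Multiset.mem_map.1 h with ⟨a, _, rfl⟩; omega
      · rw [Multiset.eq_of_mem_replicate h]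
    calc k + 1 ≤ (y.1.1.2.parts.map (fun x => x + l)
          + replicate (k + 1 - y.1.1.2.parts.card) l).card := by
          rw [Multiset.card_add, Multiset.card_map, Multiset.card_replicate]
          have := y.2.1
          omega
      _ = ((y.1.1.2.parts.map (fun x => x + l)
          + replicate (k + 1 - y.1.1.2.parts.card) l).filter (fun x => l ≤ x)).card := by
          rw [h1]
      _ ≤ _ := Multiset.card_le_card (Multiset.filter_le_filter _ hsub)

theorem bwd_fwd (hl : 1 ≤ l) (x : S k l) : bwd k l hl (fwd k l x) = x := by
  apply Subtype.ext
  apply sigma_partition_ext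
  obtain ⟨⟨n, p⟩, h1, h2⟩ := x
  show ((p.parts.filter (fun x => l < x)).map (fun x => x - l)).map (fun x => x + l)
    + (replicate (k + 1 - ((p.parts.filter (fun x => l < x)).map (fun x => x - l)).card) l
    + (conjP (conjP (ofMS (p.parts.filter (fun x => ¬ l < x)
      - replicate (k + 1 - (p.parts.filter (fun x => l < x)).card) l)
      (fun y hy => p.parts_pos (nuMem hy).1)))).parts) = p.parts
  rw [conjP_conjP, ofMS_parts]
  rw [Multiset.map_map]
  have hmap : (p.parts.filter (fun x => l < x)).map ((fun x => x + l) ∘ (fun x => x - l))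
      = p.parts.filter (fun x => l < x) := by
    rw [Multiset.map_congr rfl (fun a ha => by
      have := Multiset.of_mem_filter ha
      simp only [Function.comp_apply, id_eq]
      omega : ∀ a ∈ p.parts.filter (fun x => l < x),
        ((fun x => x + l) ∘ (fun x => x - l)) a = id a)]
    exact Multiset.map_id _
  rw [hmap, Multiset.card_map]
  rw [add_tsub_cancel_of_le (repl_le _ (count_ineq _ h2))]
  exact Multiset.filter_add_not _ _

theorem fwd_bwd (hl : 1 ≤ l) (y : T k l) : fwd k l (bwd k l hl y) = y := by
  obtain ⟨⟨⟨a, μ⟩, ⟨b, ν⟩⟩, g1, g2⟩ := y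
  have hμpos : ∀ x ∈ μ.parts, 0 < x := fun x hx => μ.parts_pos hx
  have hwle : ∀ x ∈ (conjP ν).parts, x ≤ l :=
    fun x hx => le_trans (parts_conjP_le _ _ hx) g2
  have hgt := filter_gt_lam hμpos hwle (k + 1 - μ.parts.card)
  have hle := filter_le_lam hμpos hwle (k + 1 - μ.parts.card)
  apply Subtype.ext
  apply Prod.ext
  · apply sigma_partition_ext
    show ((μ.parts.map (fun x => x + l) + (replicate (k + 1 - μ.parts.card) l
      + (conjP ν).parts)).filter (fun x => l < x)).map (fun x => x - l) = μ.parts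
    rw [hgt, Multiset.map_map]
    rw [Multiset.map_congr rfl (fun a _ => by
      simp only [Function.comp_apply, id_eq]; omega : ∀ a ∈ μ.parts,
        ((fun x => x - l) ∘ (fun x => x + l)) a = id a)]
    exact Multiset.map_id _
  · apply sigma_partition_ext
    simp only [fwd, bwd, ofMS_parts]
    calc (conjP (ofMS _ _)).parts = (conjP (conjP ν)).parts :=
          conjP_parts_congr (by
            show (μ.parts.map (fun x => x + l) + (replicate (k + 1 - μ.parts.card) l
              + (conjP ν).parts)).filter (fun x => ¬ l < x) - replicate (k + 1 -
              ((μ.parts.map (fun x => x + l) + (replicate (k + 1 - μ.parts.card) l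
              + (conjP ν).parts)).filter (fun x => l < x)).card) l = (conjP ν).parts
            rw [hgt, hle, Multiset.card_map, add_tsub_cancel_left])
      _ = ν.parts := by rw [conjP_conjP]

variable (k l) in
def hookEquiv (hl : 1 ≤ l) : S k l ≃ T k l where
  toFun := fwd k l
  invFun := bwd k l hl
  left_inv := bwd_fwd hl
  right_inv := fwd_bwd hl

theorem size_eq (hl : 1 ≤ l) (x : S k l) :
    x.val.1 = l * (k + 1) + ((hookEquiv k l hl) x).val.1.1 + ((hookEquiv k l hl) x).val.2.1 := by
  obtain ⟨⟨n, p⟩, h1, h2⟩ := x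
  show n = l * (k + 1)
      + ((p.parts.filter (fun x => l < x)).map (fun x => x - l)).sum
      + ((p.parts.filter (fun x => ¬ l < x))
          - replicate (k + 1 - (p.parts.filter (fun x => l < x)).card) l).sum
  set f1 := p.parts.filter (fun x => l < x) with hf1
  set f2 := p.parts.filter (fun x => ¬ l < x) with hf2
  have hsum : f1.sum + f2.sum = n := by
    rw [← Multiset.sum_add, Multiset.filter_add_not, p.parts_sum]
  have e2 : (f1.map (fun x => x - l)).sum = f1.sum - l * f1.card :=
    sum_map_sub _ (fun x hx => le_of_lt (Multiset.of_mem_filter hx))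
  have e3 : l * f1.card ≤ f1.sum := by
    have := Multiset.card_nsmul_le_sum
      (fun x hx => le_of_lt (Multiset.of_mem_filter hx) : ∀ x ∈ f1, l ≤ x)
    rwa [smul_eq_mul, mul_comm] at this
  have hrep : replicate (k + 1 - f1.card) l ≤ f2 := repl_le _ (count_ineq _ h2)
  have e4 : f2.sum = (replicate (k + 1 - f1.card) l).sum + (f2 - replicate (k + 1 - f1.card) l).sum := by
    conv_lhs => rw [← add_tsub_cancel_of_le hrep]
    rw [Multiset.sum_add]
  have e5 : (replicate (k + 1 - f1.card) l).sum = (k + 1 - f1.card) * l := by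
    rw [Multiset.sum_replicate, smul_eq_mul]
  have hk : f1.card ≤ k := h1
  have hl2 : l * (k+1) = l * k + l := by ring
  rw [e2]
  have hcard : k + 1 - f1.card + f1.card = k + 1 := by omega
  -- arithmetic
  have : (k + 1 - f1.card) * l + l * f1.card = l * (k + 1) := by
    have : (k + 1 - f1.card) * l = (k+1) * l - f1.card * l := by
      rw [Nat.sub_mul]
    rw [this]
    have h' : f1.card * l ≤ (k+1) * l := Nat.mul_le_mul_right _ (by omega)
    rw [mul_comm l (k+1), mul_comm l f1.card]
    omega
  omega



end Stmt12Aux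

/-! ### Generating function machinery (adapted from Archive/Wiedijk100Theorems/Partition.lean) -/

namespace GFAux
open Finset.HasAntidiagonal
open scoped Classical
noncomputable section
variable {α : Type*}

/-- A convenience constructor for the power series whose coefficients indicate a subset. -/
def indicatorSeries (α : Type*) [Semiring α] (s : Set ℕ) : PowerSeries α :=
  PowerSeries.mk fun n => if n ∈ s then 1 else 0

theorem coeff_indicator (s : Set ℕ) [Semiring α] (n : ℕ) :
    coeff n (indicatorSeries α s) = if n ∈ s then 1 else 0 :=
  coeff_mk _ _

theorem coeff_indicator_pos (s : Set ℕ) [Semiring α] (n : ℕ) (h : n ∈ s) :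
    coeff n (indicatorSeries α s) = 1 := by rw [coeff_indicator, if_pos h]

theorem coeff_indicator_neg (s : Set ℕ) [Semiring α] (n : ℕ) (h : n ∉ s) :
    coeff n (indicatorSeries α s) = 0 := by rw [coeff_indicator, if_neg h]

theorem constantCoeff_indicator (s : Set ℕ) [Semiring α] :
    constantCoeff (indicatorSeries α s) = if 0 ∈ s then 1 else 0 :=
  rfl

theorem num_series' [Field α] (i : ℕ) :
    (1 - (X : PowerSeries α) ^ (i + 1))⁻¹ = indicatorSeries α {k | i + 1 ∣ k} := by
  rw [PowerSeries.inv_eq_iff_mul_eq_one]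
  · ext n
    cases n with
    | zero => simp [mul_sub, zero_pow, constantCoeff_indicator]
    | succ n =>
      simp only [coeff_one, if_false, mul_sub, mul_one, coeff_indicator,
        LinearMap.map_sub, reduceCtorEq]
      simp_rw [coeff_mul, coeff_X_pow, coeff_indicator, @boole_mul _ _ _ _]
      erw [@sum_ite _ _ _ _ _ (fun _ => Classical.propDecidable _), sum_ite]
      simp_rw [@filter_filter _ _ _ _ _, sum_const_zero, add_zero, sum_const, nsmul_eq_mul, mul_one,
        sub_eq_iff_eq_add, zero_add]
      symm
      split_ifs with h
      · suffices #{a ∈ antidiagonal (n + 1) | i + 1 ∣ a.fst ∧ a.snd = i + 1} = 1 by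
          simp only [Set.mem_setOf_eq]; convert congr_arg ((↑) : ℕ → α) this; norm_cast
        rw [card_eq_one]
        cases' h with p hp
        refine ⟨((i + 1) * (p - 1), i + 1), ?_⟩
        ext ⟨a₁, a₂⟩
        simp only [mem_filter, Prod.mk_inj, HasAntidiagonal.mem_antidiagonal, mem_singleton]
        constructor
        · rintro ⟨a_left, ⟨a, rfl⟩, rfl⟩
          refine ⟨?_, rfl⟩
          rw [Nat.mul_sub_left_distrib, ← hp, ← a_left, mul_one, Nat.add_sub_cancel]
        · rintro ⟨rfl, rfl⟩
          match p with
          | 0 => rw [mul_zero] at hp; cases hp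
          | p + 1 => rw [hp]; simp [mul_add]
      · suffices #{a ∈ antidiagonal (n + 1) | i + 1 ∣ a.fst ∧ a.snd = i + 1} = 0 by
          simp only [Set.mem_setOf_eq]; convert congr_arg ((↑) : ℕ → α) this; norm_cast
        rw [card_eq_zero]
        apply eq_empty_of_forall_notMem
        simp only [Prod.forall, mem_filter, not_and, HasAntidiagonal.mem_antidiagonal]
        rintro _ h₁ h₂ ⟨a, rfl⟩ rfl
        apply h
        simp [← h₂]
  · simp [zero_pow]

-- The main workhorse of the partition theorem proof.
theorem partialGF_prop (α : Type*) [CommSemiring α] (n : ℕ) (s : Finset ℕ) (hs : ∀ i ∈ s, 0 < i)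
    (c : ℕ → Set ℕ) (hc : ∀ i, i ∉ s → 0 ∈ c i) :
    #{p : n.Partition | (∀ j, p.parts.count j ∈ c j) ∧ ∀ j ∈ p.parts, j ∈ s} =
      coeff n (∏ i ∈ s, indicatorSeries α ((· * i) '' c i)) := by
  simp_rw [coeff_prod, coeff_indicator, prod_boole, sum_boole]
  apply congr_arg
  simp only [mem_univ, forall_true_left, not_and, not_forall, exists_prop,
    Set.mem_image, not_exists]
  set φ : (a : Nat.Partition n) →
    a ∈ filter (fun p ↦ (∀ (j : ℕ), Multiset.count j p.parts ∈ c j) ∧ ∀ j ∈ p.parts, j ∈ s) univ →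
    ℕ →₀ ℕ := fun p _ => {
      toFun := fun i => Multiset.count i p.parts • i
      support := Finset.filter (fun i => i ≠ 0) p.parts.toFinset
      mem_support_toFun := fun a => by
        simp only [smul_eq_mul, ne_eq, mul_eq_zero, Multiset.count_eq_zero]
        rw [not_or, not_not]
        simp only [Multiset.mem_toFinset, not_not, mem_filter] }
  refine Finset.card_bij φ ?_ ?_ ?_
  · intro a ha
    simp only [φ, not_forall, not_exists, not_and, exists_prop, mem_filter]
    rw [mem_finsuppAntidiag]
    dsimp only [ne_eq, smul_eq_mul, id_eq, eq_mpr_eq_cast, le_eq_subset, Finsupp.coe_mk]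
    simp only [mem_univ, forall_true_left, not_and, not_forall, exists_prop,
      mem_filter, true_and] at ha
    refine ⟨⟨?_, fun i ↦ ?_⟩, fun i _ ↦ ⟨a.parts.count i, ha.1 i, rfl⟩⟩
    · conv_rhs => simp [← a.parts_sum]
      rw [sum_multiset_count_of_subset _ s]
      · simp only [smul_eq_mul]
      · intro i
        simp only [Multiset.mem_toFinset, not_not, mem_filter]
        apply ha.2
    · simp only [ne_eq, Multiset.mem_toFinset, not_not, mem_filter, and_imp]
      exact fun hi _ ↦ ha.2 i hi
  · intro p₁ hp₁ p₂ hp₂ h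
    apply Nat.Partition.ext
    simp only [true_and, mem_univ, mem_filter] at hp₁ hp₂
    ext i
    simp only [φ, ne_eq, Multiset.mem_toFinset, not_not, smul_eq_mul, Finsupp.mk.injEq] at h
    by_cases hi : i = 0
    · rw [hi]
      rw [Multiset.count_eq_zero_of_notMem]
      · rw [Multiset.count_eq_zero_of_notMem]
        intro a; exact Nat.lt_irrefl 0 (hs 0 (hp₂.2 0 a))
      intro a; exact Nat.lt_irrefl 0 (hs 0 (hp₁.2 0 a))
    · rw [← mul_left_inj' hi]
      rw [funext_iff] at h
      exact h.2 i
  · simp only [φ, mem_filter, mem_finsuppAntidiag, mem_univ, exists_prop, true_and, and_assoc]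
    rintro f ⟨hf, hf₃, hf₄⟩
    have hf' : f ∈ finsuppAntidiag s n := mem_finsuppAntidiag.mpr ⟨hf, hf₃⟩
    simp only [mem_finsuppAntidiag] at hf'
    refine ⟨⟨∑ i ∈ s, Multiset.replicate (f i / i) i, ?_, ?_⟩, ?_, ?_, ?_⟩
    · intro i hi
      simp only [exists_prop, Multiset.mem_sum, mem_map, Function.Embedding.coeFn_mk] at hi
      rcases hi with ⟨t, ht, z⟩
      apply hs
      rwa [Multiset.eq_of_mem_replicate z]
    · simp_rw [Multiset.sum_sum, Multiset.sum_replicate, Nat.nsmul_eq_mul]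
      rw [← hf'.1]
      refine sum_congr rfl fun i hi => Nat.div_mul_cancel ?_
      rcases hf₄ i hi with ⟨w, _, hw₂⟩
      rw [← hw₂]
      exact dvd_mul_left _ _
    · intro i
      simp_rw [Multiset.count_sum', Multiset.count_replicate, sum_ite_eq']
      split_ifs with h
      · rcases hf₄ i h with ⟨w, hw₁, hw₂⟩
        rwa [← hw₂, Nat.mul_div_cancel _ (hs i h)]
      · exact hc _ h
    · intro i hi
      rw [Multiset.mem_sum] at hi
      rcases hi with ⟨j, hj₁, hj₂⟩
      rwa [Multiset.eq_of_mem_replicate hj₂]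
    · ext i
      simp_rw [Multiset.count_sum', Multiset.count_replicate, sum_ite_eq']
      simp only [ne_eq, Multiset.mem_toFinset, not_not, smul_eq_mul, ite_mul,
        zero_mul, Finsupp.coe_mk]
      split_ifs with h
      · apply Nat.div_mul_cancel
        rcases hf₄ i h with ⟨w, _, hw₂⟩
        apply Dvd.intro_left _ hw₂
      · apply symm
        rw [← Finsupp.notMem_support_iff]
        exact notMem_mono hf'.2 h



theorem Gm_eq (m : ℕ) :
    Gm m = PowerSeries.mk fun j =>
      (Nat.card {p : Nat.Partition j // p.parts.card ≤ m} : ℚ) := by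
  ext j
  rw [coeff_mk]
  have h1 : Gm m = ∏ i ∈ Finset.Icc 1 m, indicatorSeries ℚ ((· * i) '' Set.univ) := by
    rw [Gm]
    apply Finset.prod_congr rfl
    intro i hi
    have hi1 : 1 ≤ i := (Finset.mem_Icc.1 hi).1
    have himg : (· * i) '' Set.univ = {k | i ∣ k} := by
      ext x
      simp only [Set.image_univ, Set.mem_range, Set.mem_setOf_eq]
      constructor
      · rintro ⟨c, rfl⟩; exact Dvd.intro_left c rfl
      · rintro ⟨c, rfl⟩; exact ⟨c, mul_comm c i⟩
    have h2 := num_series' (α := ℚ) (i - 1)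
    rw [Nat.sub_add_cancel hi1] at h2
    rw [h2, himg]
  rw [h1, ← partialGF_prop ℚ j (Finset.Icc 1 m) (fun i hi => (Finset.mem_Icc.1 hi).1)
    (fun _ => Set.univ) (fun _ _ => trivial)]
  rw [Nat.card_eq_fintype_card, Fintype.card_subtype]
  congr 1
  apply Finset.card_bij (fun p _ => Stmt12Aux.conjP p)
  · intro p hp
    simp only [Finset.mem_filter, Finset.mem_univ, true_and] at hp ⊢
    exact Stmt12Aux.card_conjP_le p m
      (fun x hx => (Finset.mem_Icc.1 (hp.2 x hx)).2)
  · intro p hp q hq h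
    have := congrArg Stmt12Aux.conjP h
    rwa [Stmt12Aux.conjP_conjP, Stmt12Aux.conjP_conjP] at this
  · intro q hq
    simp only [Finset.mem_filter, Finset.mem_univ, true_and] at hq
    refine ⟨Stmt12Aux.conjP q, ?_, Stmt12Aux.conjP_conjP q⟩
    simp only [Finset.mem_filter, Finset.mem_univ, true_and]
    refine ⟨fun c => trivial, fun i hi => Finset.mem_Icc.2
      ⟨(Stmt12Aux.conjP q).parts_pos hi, le_trans (Stmt12Aux.parts_conjP_le q i hi) hq⟩⟩


theorem msum_le {s t : Multiset ℕ} (h : s ≤ t) : s.sum ≤ t.sum := by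
  obtain ⟨u, rfl⟩ := Multiset.le_iff_exists_add.mp h
  simp

theorem hook_ge {k l n : ℕ} (p : Nat.Partition n) (h2 : ContainsCell k l p) :
    l * (k + 1) ≤ n := by
  have h3 : (p.parts.filter (fun x => l ≤ x)).card • l
      ≤ (p.parts.filter (fun x => l ≤ x)).sum :=
    Multiset.card_nsmul_le_sum (fun x hx => Multiset.of_mem_filter hx)
  have h4 : (p.parts.filter (fun x => l ≤ x)).sum ≤ p.parts.sum :=
    msum_le (Multiset.filter_le _ _)
  rw [p.parts_sum] at h4
  rw [smul_eq_mul] at h3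
  have h5 := h2
  rw [ContainsCell] at h5
  have : l * (k + 1) ≤ (p.parts.filter (fun x => l ≤ x)).card * l := by
    rw [mul_comm]
    exact Nat.mul_le_mul_right _ h5
  omega

theorem card_hook (k l : ℕ) (hl : 1 ≤ l) (n : ℕ) (hn : l * (k + 1) ≤ n) :
    Nat.card {p : Nat.Partition n // InHook k l p ∧ ContainsCell k l p}
      = ∑ ab ∈ Finset.HasAntidiagonal.antidiagonal (n - l * (k + 1)),
          Nat.card {μ : Nat.Partition ab.1 // μ.parts.card ≤ k}
            * Nat.card {ν : Nat.Partition ab.2 // ν.parts.card ≤ l} := by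
  classical
  set L := l * (k + 1) with hL
  let F : (Finset.HasAntidiagonal.antidiagonal (n - L) : Finset (ℕ × ℕ)) → Type :=
    fun ab => {μ : Nat.Partition (ab : ℕ × ℕ).1 // μ.parts.card ≤ k}
      × {ν : Nat.Partition (ab : ℕ × ℕ).2 // ν.parts.card ≤ l}
  -- E1
  have E1 : {p : Nat.Partition n // InHook k l p ∧ ContainsCell k l p}
      ≃ {x : Stmt12Aux.S k l // x.val.1 = n} := by
    apply Equiv.ofBijective (f := fun p => ⟨⟨⟨n, p.1⟩, p.2⟩, rfl⟩)
    constructor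
    · intro p q h
      have := congrArg (fun z => z.val.val.2.parts) h
      simp only at this
      exact Subtype.ext (Nat.Partition.ext this)
    · rintro ⟨⟨⟨m, p⟩, h⟩, rfl⟩
      exact ⟨⟨p, h⟩, rfl⟩
  -- E2
  have E2 : {x : Stmt12Aux.S k l // x.val.1 = n}
      ≃ {y : Stmt12Aux.T k l // n = L + y.val.1.1 + y.val.2.1} :=
    (Stmt12Aux.hookEquiv k l hl).subtypeEquiv (fun x => by
      rw [Stmt12Aux.size_eq hl x]
      exact eq_comm)
  -- E3
  have E3 : {y : Stmt12Aux.T k l // n = L + y.val.1.1 + y.val.2.1}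
      ≃ Σ ab, F ab :=
    { toFun := fun z => ⟨⟨(z.val.val.1.1, z.val.val.2.1), by
        rw [Finset.HasAntidiagonal.mem_antidiagonal]
        have := z.prop
        omega⟩, (⟨z.val.val.1.2, z.val.prop.1⟩, ⟨z.val.val.2.2, z.val.prop.2⟩)⟩
      invFun := fun w => ⟨⟨(⟨(w.1 : ℕ × ℕ).1, w.2.1.val⟩, ⟨(w.1 : ℕ × ℕ).2, w.2.2.val⟩),
        ⟨w.2.1.prop, w.2.2.prop⟩⟩, by
        have := w.1.prop
        rw [Finset.HasAntidiagonal.mem_antidiagonal] at this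
        show n = L + (w.1 : ℕ × ℕ).1 + (w.1 : ℕ × ℕ).2
        omega⟩
      left_inv := fun z => rfl
      right_inv := fun w => rfl }
  rw [Nat.card_congr (E1.trans (E2.trans E3)), Nat.card_eq_fintype_card, Fintype.card_sigma]
  rw [← Finset.sum_coe_sort (Finset.HasAntidiagonal.antidiagonal (n - L))
    (fun ab => Nat.card {μ : Nat.Partition ab.1 // μ.parts.card ≤ k}
            * Nat.card {ν : Nat.Partition ab.2 // ν.parts.card ≤ l})]
  apply Finset.sum_congr rfl
  intro ab _
  rw [Fintype.card_prod, Nat.card_eq_fintype_card, Nat.card_eq_fintype_card]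

end
end GFAux

theorem stmt12 (k l : ℕ) (hl : 1 ≤ l) :
    (∃ e : {pp : Σ n : ℕ, Nat.Partition n // InHook k l pp.2 ∧ ContainsCell k l pp.2}
            ≃ {qq : (Σ m : ℕ, Nat.Partition m) × (Σ r : ℕ, Nat.Partition r) //
                qq.1.2.parts.card ≤ k ∧ qq.2.2.parts.card ≤ l},
        ∀ x, x.val.1 = l * (k + 1) + (e x).val.1.1 + (e x).val.2.1) ∧
    (PowerSeries.mk fun n =>
        (Nat.card {p : Nat.Partition n // InHook k l p ∧ ContainsCell k l p} : ℚ))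
      = (PowerSeries.X : PowerSeries ℚ) ^ (l * (k + 1)) * Gm k * Gm l := by
  constructor
  · exact ⟨Stmt12Aux.hookEquiv k l hl, Stmt12Aux.size_eq hl⟩
  · ext n
    rw [coeff_mk]
    rcases le_or_gt (l * (k + 1)) n with hn | hn
    · obtain ⟨d, rfl⟩ : ∃ d, n = d + l * (k + 1) := ⟨n - l * (k + 1), by omega⟩
      rw [GFAux.card_hook k l hl _ hn, mul_assoc, PowerSeries.coeff_X_pow_mul,
        GFAux.Gm_eq k, GFAux.Gm_eq l, PowerSeries.coeff_mul]
      have hd : d + l * (k + 1) - l * (k + 1) = d := by omega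
      rw [hd]
      push_cast
      apply Finset.sum_congr rfl
      intro ab _
      rw [coeff_mk, coeff_mk]
    · have he : IsEmpty {p : Nat.Partition n // InHook k l p ∧ ContainsCell k l p} :=
        ⟨fun x => absurd (GFAux.hook_ge x.1 x.2.2) (by omega)⟩
      rw [Nat.card_of_isEmpty, Nat.cast_zero, mul_assoc, PowerSeries.coeff_mul]
      symm
      apply Finset.sum_eq_zero
      intro ab hab
      rw [Finset.HasAntidiagonal.mem_antidiagonal] at hab
      rw [PowerSeries.coeff_X_pow, if_neg (by omega)]
      simp
end
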